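/- arXiv:1708.01854 — 3 statements merged into one kernel-verified Lean document; each statement's English description precedes it below -/
import Mathlib

section
/- Let q be a prime, r and n positive integers, F_{q^r} the field with q^r elements carrying the trivial action of the cyclic group C_n, and set m := gcd(q^r − 1, n). Then the quotient of ℤ/mℤ by the equivalence relation a ∼ b iff there exists an integer j with gcd(j, n) = 1 and b ≡ j·a (mod m), is in bijection with the set of positive divisors of m. Consequently, the orbits of the pullback action of Aut(C_n) on H²(C_n, F_{q^r}^*) (trivial action) are in one-to-one correspondence with the set of positive divisors of gcd(q^r − 1, n). -/
def IsTwoCocycle {G F : Type*} [Group G] [Field F] (η : G →* RingAut F)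
    (f : G → G → Fˣ) : Prop :=
  ∀ g h k : G, η g (f h k : F) * ((f g (h * k) : Fˣ) : F) =
    ((f g h : Fˣ) : F) * ((f (g * h) k : Fˣ) : F)

def IsTwoCoboundary {G F : Type*} [Group G] [Field F] (η : G →* RingAut F)
    (f : G → G → Fˣ) : Prop :=
  ∃ r : G → Fˣ, ∀ g h : G,
    (f g h : F) = (r g : F) * η g (r h : F) * (((r (g * h))⁻¹ : Fˣ) : F)

def Cohomologous {G F : Type*} [Group G] [Field F] (η : G →* RingAut F)
    (f₁ f₂ : G → G → Fˣ) : Prop :=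
  IsTwoCoboundary η fun g h => f₁ g h * (f₂ g h)⁻¹

/-- The group of 2-cocycles, as a subgroup of all functions `G → G → Fˣ`. -/
def twoCocycles {G F : Type*} [Group G] [Field F] (η : G →* RingAut F) :
    Subgroup (G → G → Fˣ) where
  carrier := {f | IsTwoCocycle η f}
  one_mem' := by intro g h k; simp
  mul_mem' := by
    intro a b ha hb g h k
    simp only [Pi.mul_apply, Units.val_mul, map_mul]
    rw [mul_mul_mul_comm, ha g h k, hb g h k, mul_mul_mul_comm]
  inv_mem' := by
    intro a ha g h k
    simp only [Pi.inv_apply, Units.val_inv_eq_inv_val, map_inv₀]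
    rw [← mul_inv, ← mul_inv, ha g h k]

/-- The group of 2-coboundaries, as a subgroup of all functions `G → G → Fˣ`. -/
def twoCoboundaries {G F : Type*} [Group G] [Field F] (η : G →* RingAut F) :
    Subgroup (G → G → Fˣ) where
  carrier := {f | IsTwoCoboundary η f}
  one_mem' := ⟨1, by intro g h; simp⟩
  mul_mem' := by
    rintro a b ⟨r, hr⟩ ⟨t, ht⟩
    refine ⟨r * t, fun g h => ?_⟩
    simp only [Pi.mul_apply, Units.val_mul, map_mul, mul_inv, hr g h, ht g h,
      Units.val_inv_eq_inv_val]
    ring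
  inv_mem' := by
    rintro a ⟨r, hr⟩
    refine ⟨r⁻¹, fun g h => ?_⟩
    simp only [Pi.inv_apply, Units.val_inv_eq_inv_val, map_inv₀, hr g h, inv_inv, mul_inv]

/-- The second cohomology group `H²_η(G, F^*)`: 2-cocycles modulo 2-coboundaries. -/
abbrev H2 {G F : Type*} [Group G] [Field F] (η : G →* RingAut F) :=
  twoCocycles η ⧸ ((twoCoboundaries η).subgroupOf (twoCocycles η))

/-- The norm map `x ↦ ∏_{i=0}^{n-1} σ^i(x)` on `F^*`. -/
def cyclicNormHom {G F : Type*} [Group G] [Field F] (η : G →* RingAut F) (σ : G) (n : ℕ) :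
    Fˣ →* Fˣ where
  toFun x := ∏ i ∈ Finset.range n, Units.map (η (σ ^ i)).toMonoidHom x
  map_one' := by simp
  map_mul' x y := by simp [Finset.prod_mul_distrib]

/-- The subgroup `(F^*)^{C_n}` of elements of `F^*` fixed by the action. -/
def fixedUnits {G F : Type*} [Group G] [Field F] (η : G →* RingAut F) :
    Subgroup Fˣ where
  carrier := {x | ∀ g : G, η g (x : F) = (x : F)}
  one_mem' := by intro g; simp
  mul_mem' := by intro a b ha hb g; simp [ha g, hb g]
  inv_mem' := by intro a ha g; simp [ha g]

/-- The orbit relation on `H²(G, F^*)` induced by the pullback action of `Aut(G)`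
(here stated for an arbitrary action `η`; pullbacks are taken along `η`-compatible
automorphisms, which for the trivial action means all automorphisms). -/
def pullbackRel {G F : Type*} [Group G] [Field F] (η : G →* RingAut F)
    (c₁ c₂ : H2 η) : Prop :=
  ∃ ψ : MulAut G, (∀ g : G, η (ψ g) = η g) ∧
    ∃ (f : G → G → Fˣ) (hf : f ∈ twoCocycles η)
      (hf' : (fun g g' => f (ψ g) (ψ g')) ∈ twoCocycles η),
      c₁ = QuotientGroup.mk ⟨f, hf⟩ ∧
      c₂ = QuotientGroup.mk ⟨fun g g' => f (ψ g) (ψ g'), hf'⟩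

section PhiSec

variable {G : Type*} [Group G]

open Classical in
/-- Discrete logarithm with respect to a generator. -/
noncomputable def phi (σ : G) (n : ℕ) (g : G) : ℕ :=
  if h : ∃ k, k < n ∧ σ ^ k = g then h.choose else 0

variable {σ : G} {n : ℕ}

lemma exists_pow_lt_of_orderOf (hn : 0 < n) (hord : orderOf σ = n) {g : G}
    (hg : g ∈ Subgroup.zpowers σ) : ∃ k, k < n ∧ σ ^ k = g := by
  obtain ⟨z, rfl⟩ := Subgroup.mem_zpowers_iff.mp hg
  refine ⟨(z % (n : ℤ)).toNat, ?_, ?_⟩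
  · have h1 : 0 ≤ z % (n : ℤ) := Int.emod_nonneg z (by exact_mod_cast hn.ne')
    have h2 : z % (n : ℤ) < n := Int.emod_lt_of_pos z (by exact_mod_cast hn)
    omega
  · have h1 : 0 ≤ z % (n : ℤ) := Int.emod_nonneg z (by exact_mod_cast hn.ne')
    rw [← zpow_natCast, Int.toNat_of_nonneg h1, ← hord, zpow_mod_orderOf]

lemma phi_spec (hn : 0 < n) (hord : orderOf σ = n) {g : G} (hg : g ∈ Subgroup.zpowers σ) :
    phi σ n g < n ∧ σ ^ (phi σ n g) = g := by
  have h := exists_pow_lt_of_orderOf hn hord hg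
  rw [phi, dif_pos h]
  exact h.choose_spec

lemma pow_phi (hn : 0 < n) (hord : orderOf σ = n) {g : G} (hg : g ∈ Subgroup.zpowers σ) :
    σ ^ (phi σ n g) = g :=
  (phi_spec hn hord hg).2

lemma phi_lt (hn : 0 < n) (hord : orderOf σ = n) {g : G} (hg : g ∈ Subgroup.zpowers σ) :
    phi σ n g < n :=
  (phi_spec hn hord hg).1

lemma phi_unique (hn : 0 < n) (hord : orderOf σ = n) {g : G} {k : ℕ} (hk : k < n)
    (hkg : σ ^ k = g) (hg : g ∈ Subgroup.zpowers σ) :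
    phi σ n g = k := by
  have h1 := pow_phi hn hord hg
  have h2 := phi_lt hn hord hg
  have h3 : σ ^ (phi σ n g) = σ ^ k := by rw [h1, hkg]
  have h4 := pow_eq_pow_iff_modEq.mp h3
  rw [hord] at h4
  exact Nat.ModEq.eq_of_lt_of_lt h4 h2 hk

lemma phi_pow (hn : 0 < n) (hord : orderOf σ = n) (i : ℕ) : phi σ n (σ ^ i) = i % n := by
  refine phi_unique hn hord (Nat.mod_lt _ hn) ?_
    (Subgroup.mem_zpowers_iff.mpr ⟨i, zpow_natCast σ i⟩)
  rw [← hord, pow_mod_orderOf]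

lemma phi_one (hn : 0 < n) (hord : orderOf σ = n) : phi σ n (1 : G) = 0 := by
  simpa using phi_pow hn hord 0

lemma phi_mul (hn : 0 < n) (hord : orderOf σ = n) (hgen : ∀ g : G, g ∈ Subgroup.zpowers σ)
    (g h : G) : phi σ n (g * h) = (phi σ n g + phi σ n h) % n := by
  have : σ ^ (phi σ n g + phi σ n h) = g * h := by
    rw [pow_add, pow_phi hn hord (hgen g), pow_phi hn hord (hgen h)]
  rw [← this, phi_pow hn hord]

/-- The carrying exponent. -/
noncomputable def ee (σ : G) (n : ℕ) (g h : G) : ℕ := (phi σ n g + phi σ n h) / n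

lemma phi_add_eq (hn : 0 < n) (hord : orderOf σ = n) (hgen : ∀ g : G, g ∈ Subgroup.zpowers σ)
    (g h : G) : phi σ n g + phi σ n h = n * ee σ n g h + phi σ n (g * h) := by
  rw [phi_mul hn hord hgen, ee]
  exact (Nat.div_add_mod _ n).symm

end PhiSec
section CocycleSec

variable {G F : Type*} [Group G] [Field F]

lemma trivAct (g : G) (x : F) : (1 : G →* RingAut F) g x = x := rfl

lemma cocycle_units {f : G → G → Fˣ} (hf : IsTwoCocycle (1 : G →* RingAut F) f)
    (g h k : G) : f h k * f g (h * k) = f g h * f (g * h) k := by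
  have := hf g h k
  rw [trivAct] at this
  exact Units.ext (by push_cast; exact this)

lemma coboundary_units {f : G → G → Fˣ} (hf : IsTwoCoboundary (1 : G →* RingAut F) f) :
    ∃ r : G → Fˣ, ∀ g h : G, f g h = r g * r h * (r (g * h))⁻¹ := by
  obtain ⟨r, hr⟩ := hf
  refine ⟨r, fun g h => ?_⟩
  have := hr g h
  rw [trivAct] at this
  push_cast at this
  exact Units.ext (by push_cast; exact this)

lemma isTwoCoboundary_of_units {f : G → G → Fˣ} (r : G → Fˣ)
    (h : ∀ g h : G, f g h = r g * r h * (r (g * h))⁻¹) :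
    IsTwoCoboundary (1 : G →* RingAut F) f := by
  refine ⟨r, fun g h' => ?_⟩
  rw [trivAct, h g h']
  push_cast
  ring

lemma cocycle_apply_one {f : G → G → Fˣ} (hf : IsTwoCocycle (1 : G →* RingAut F) f)
    (g : G) : f g 1 = f 1 1 := by
  have := cocycle_units hf g⁻¹ g 1
  simp only [mul_one, inv_mul_cancel] at this
  exact mul_right_cancel (this.trans (mul_comm _ _))

lemma cocycle_one_apply {f : G → G → Fˣ} (hf : IsTwoCocycle (1 : G →* RingAut F) f)
    (k : G) : f 1 k = f 1 1 := by
  have := cocycle_units hf 1 1 k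
  simp only [one_mul] at this
  exact mul_right_cancel this

variable (σ : G) (n : ℕ)

/-- The standard cocycle attached to `a : Fˣ`. -/
noncomputable def fa (a : Fˣ) : G → G → Fˣ := fun g h => a ^ ee σ n g h

/-- Partial products of `f (σ^t) σ`. -/
noncomputable def Qf (f : G → G → Fˣ) (i : ℕ) : Fˣ :=
  ∏ t ∈ Finset.range i, f (σ ^ t) σ

lemma Qf_zero (f : G → G → Fˣ) : Qf σ f 0 = 1 := by simp [Qf]

lemma Qf_succ (f : G → G → Fˣ) (i : ℕ) : Qf σ f (i + 1) = Qf σ f i * f (σ ^ i) σ :=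
  Finset.prod_range_succ _ _

lemma Qf_mul (f₁ f₂ : G → G → Fˣ) (i : ℕ) :
    Qf σ (f₁ * f₂) i = Qf σ f₁ i * Qf σ f₂ i := by
  simp [Qf, Finset.prod_mul_distrib]

lemma Qf_key {f : G → G → Fˣ} (hf : IsTwoCocycle (1 : G →* RingAut F) f) (i j : ℕ) :
    f (σ ^ i) (σ ^ j) * Qf σ f i * Qf σ f j = f 1 1 * Qf σ f (i + j) := by
  induction j with
  | zero => simp [Qf_zero, pow_zero, cocycle_apply_one hf]
  | succ j ih =>
    have coc := cocycle_units hf (σ ^ i) (σ ^ j) σ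
    rw [← pow_succ, ← pow_add] at coc
    rw [Qf_succ, ← add_assoc, Qf_succ]
    have coc' := congrArg Units.val coc
    have ih' := congrArg Units.val ih
    push_cast at coc' ih'
    refine Units.ext ?_
    push_cast
    linear_combination ((Qf σ f i : F) * (Qf σ f j : F)) * coc' + (f (σ ^ (i+j)) σ : F) * ih' 
lemma units_helper (a b c d e x : Fˣ) (h : x * b * c = a * (d * e)) :
    x * e⁻¹ = (a * b⁻¹) * (a * c⁻¹) * (a * d⁻¹)⁻¹ := by
  have h' := congrArg Units.val h
  push_cast at h'
  refine Units.ext ?_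
  push_cast
  field_simp
  linear_combination h'

lemma Qf_add_n (hord : orderOf σ = n) (f : G → G → Fˣ) (i : ℕ) :
    Qf σ f (i + n) = Qf σ f i * Qf σ f n := by
  induction i with
  | zero => simp [Qf_zero]
  | succ i ih =>
    have h : i + 1 + n = (i + n) + 1 := by omega
    rw [h, Qf_succ, ih, Qf_succ]
    have hp : σ ^ (i + n) = σ ^ i := by rw [pow_add, ← hord, pow_orderOf_eq_one, mul_one]
    rw [hp, mul_right_comm]

lemma Qf_mul_n (hord : orderOf σ = n) (f : G → G → Fˣ) (k s : ℕ) :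
    Qf σ f (k * n + s) = Qf σ f s * (Qf σ f n) ^ k := by
  induction k with
  | zero => simp
  | succ k ih =>
    have h : (k + 1) * n + s = (k * n + s) + n := by ring
    rw [h, Qf_add_n σ n hord, ih, pow_succ, mul_assoc]

lemma fa_cocycle (hn : 0 < n) (hord : orderOf σ = n)
    (hgen : ∀ g : G, g ∈ Subgroup.zpowers σ) (a : Fˣ) :
    IsTwoCocycle (1 : G →* RingAut F) (fa σ n a) := by
  intro g h k
  rw [trivAct]
  have key : ee σ n h k + ee σ n g (h * k) = ee σ n g h + ee σ n (g * h) k := by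
    have h1 := phi_add_eq hn hord hgen h k
    have h2 := phi_add_eq hn hord hgen g (h * k)
    have h3 := phi_add_eq hn hord hgen g h
    have h4 := phi_add_eq hn hord hgen (g * h) k
    rw [← mul_assoc] at h2
    refine Nat.eq_of_mul_eq_mul_left hn ?_
    rw [mul_add, mul_add]
    set A := n * ee σ n h k
    set B := n * ee σ n g (h * k)
    set C := n * ee σ n g h
    set D := n * ee σ n (g * h) k
    omega
  show ((fa σ n a h k : Fˣ) : F) * _ = _
  simp only [fa]
  push_cast
  rw [← pow_add, ← pow_add, key]

lemma normal_form (hn : 0 < n) (hord : orderOf σ = n)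
    (hgen : ∀ g : G, g ∈ Subgroup.zpowers σ) {f : G → G → Fˣ}
    (hf : IsTwoCocycle (1 : G →* RingAut F) f) :
    IsTwoCoboundary (1 : G →* RingAut F)
      (fun g h => f g h * (fa σ n (Qf σ f n) g h)⁻¹) := by
  refine isTwoCoboundary_of_units (fun g => f 1 1 * (Qf σ f (phi σ n g))⁻¹) ?_
  intro g h
  have key := Qf_key σ hf (phi σ n g) (phi σ n h)
  rw [pow_phi hn hord (hgen g), pow_phi hn hord (hgen h)] at key
  have hsplit : phi σ n g + phi σ n h = ee σ n g h * n + phi σ n (g * h) := by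
    rw [Nat.mul_comm]
    exact phi_add_eq hn hord hgen g h
  rw [hsplit, Qf_mul_n σ n hord] at key
  exact units_helper _ _ _ _ _ _ key
lemma Qf_inv (f : G → G → Fˣ) (i : ℕ) : Qf σ f⁻¹ i = (Qf σ f i)⁻¹ := by
  simp [Qf]

lemma Qf_coboundary (hord : orderOf σ = n) {d : G → G → Fˣ}
    (hd : IsTwoCoboundary (1 : G →* RingAut F) d) :
    ∃ z : Fˣ, Qf σ d n = z ^ n := by
  obtain ⟨r, hr⟩ := coboundary_units hd
  refine ⟨r σ, ?_⟩
  have hterm : ∀ t : ℕ, d (σ ^ t) σ = r σ * (r (σ ^ t) / r (σ ^ (t + 1))) := by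
    intro t
    rw [hr, ← pow_succ, div_eq_mul_inv, ← mul_assoc, mul_comm (r σ) (r (σ ^ t))]
  calc Qf σ d n = ∏ t ∈ Finset.range n, (r σ * (r (σ ^ t) / r (σ ^ (t + 1)))) :=
        Finset.prod_congr rfl (fun t _ => hterm t)
    _ = (r σ) ^ n * ∏ t ∈ Finset.range n, (r (σ ^ t) / r (σ ^ (t + 1))) := by
        rw [Finset.prod_mul_distrib, Finset.prod_const, Finset.card_range]
    _ = (r σ) ^ n * (r (σ ^ 0) / r (σ ^ n)) := by rw [Finset.prod_range_div']
    _ = (r σ) ^ n := by rw [← hord, pow_orderOf_eq_one, pow_zero, div_self', mul_one]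

lemma Qf_eq_of_coboundary (hord : orderOf σ = n) {f₁ f₂ : G → G → Fˣ}
    (hd : IsTwoCoboundary (1 : G →* RingAut F) (f₁ * f₂⁻¹)) :
    ∃ z : Fˣ, Qf σ f₁ n = Qf σ f₂ n * z ^ n := by
  obtain ⟨z, hz⟩ := Qf_coboundary σ n hord hd
  rw [Qf_mul, Qf_inv] at hz
  exact ⟨z, by rw [← hz, mul_comm (Qf σ f₂ n), mul_assoc, inv_mul_cancel, mul_one]⟩

lemma pullback_cocycle (ψ : MulAut G) {f : G → G → Fˣ}
    (hf : IsTwoCocycle (1 : G →* RingAut F) f) :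
    IsTwoCocycle (1 : G →* RingAut F) (fun g g' => f (ψ g) (ψ g')) := by
  intro g h k
  have := hf (ψ g) (ψ h) (ψ k)
  simpa [map_mul] using this

lemma pullback_coboundary (ψ : MulAut G) {d : G → G → Fˣ}
    (hd : IsTwoCoboundary (1 : G →* RingAut F) d) :
    IsTwoCoboundary (1 : G →* RingAut F) (fun g g' => d (ψ g) (ψ g')) := by
  obtain ⟨r, hr⟩ := hd
  refine ⟨fun g => r (ψ g), fun g h => ?_⟩
  have := hr (ψ g) (ψ h)
  simpa [map_mul] using this

lemma pow_n_eq_one (hord : orderOf σ = n) (hgen : ∀ g : G, g ∈ Subgroup.zpowers σ)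
    (g : G) : g ^ n = 1 := by
  obtain ⟨k, rfl⟩ := Subgroup.mem_zpowers_iff.mp (hgen g)
  rw [← zpow_natCast, ← zpow_mul, mul_comm, zpow_mul, zpow_natCast, ← hord,
    pow_orderOf_eq_one, one_zpow]

lemma sum_ee (hn : 0 < n) (hord : orderOf σ = n)
    (hgen : ∀ g : G, g ∈ Subgroup.zpowers σ) (τ : G) :
    ∑ i ∈ Finset.range n, ee σ n (τ ^ i) τ = phi σ n τ := by
  have hterm : ∀ i : ℕ, phi σ n (τ ^ i) + phi σ n τ
      = n * ee σ n (τ ^ i) τ + phi σ n (τ ^ (i + 1)) := by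
    intro i
    have := phi_add_eq hn hord hgen (τ ^ i) τ
    rwa [← pow_succ] at this
  have hsum : ∑ i ∈ Finset.range n, (phi σ n (τ ^ i) + phi σ n τ)
      = ∑ i ∈ Finset.range n, (n * ee σ n (τ ^ i) τ + phi σ n (τ ^ (i + 1))) :=
    Finset.sum_congr rfl (fun i _ => hterm i)
  have hshift : ∑ i ∈ Finset.range n, phi σ n (τ ^ (i + 1))
      = ∑ i ∈ Finset.range n, phi σ n (τ ^ i) := by
    have h1 := Finset.sum_range_succ (fun i => phi σ n (τ ^ i)) n
    have h2 := Finset.sum_range_succ' (fun i => phi σ n (τ ^ i)) n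
    simp only [pow_zero, pow_n_eq_one σ n hord hgen, phi_one hn hord] at h1 h2
    omega
  rw [Finset.sum_add_distrib, Finset.sum_add_distrib, hshift, Finset.sum_const,
    Finset.card_range, ← Finset.mul_sum, smul_eq_mul] at hsum
  refine Nat.eq_of_mul_eq_mul_left hn ?_
  omega

lemma prod_fa_pow (hn : 0 < n) (hord : orderOf σ = n)
    (hgen : ∀ g : G, g ∈ Subgroup.zpowers σ) (a : Fˣ) (τ : G) :
    ∏ t ∈ Finset.range n, fa σ n a (τ ^ t) τ = a ^ phi σ n τ := by
  rw [← sum_ee σ n hn hord hgen τ, ← Finset.prod_pow_eq_pow_sum]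
  rfl

lemma Qf_fa (hn2 : 2 ≤ n) (hord : orderOf σ = n)
    (hgen : ∀ g : G, g ∈ Subgroup.zpowers σ) (a : Fˣ) :
    Qf σ (fa σ n a) n = a := by
  have hn : 0 < n := by omega
  have := prod_fa_pow σ n hn hord hgen a σ
  rw [Qf]
  rw [this]
  have : phi σ n σ = 1 := by
    have := phi_pow hn hord 1
    rw [pow_one] at this
    rw [this, Nat.mod_eq_of_lt hn2]
  rw [this, pow_one]
lemma gen_comm (hgen : ∀ g : G, g ∈ Subgroup.zpowers σ) (a b : G) : a * b = b * a := by
  obtain ⟨x, rfl⟩ := Subgroup.mem_zpowers_iff.mp (hgen a)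
  obtain ⟨y, rfl⟩ := Subgroup.mem_zpowers_iff.mp (hgen b)
  rw [← zpow_add, ← zpow_add, add_comm]

lemma eq_one_of_n_eq_one (hord : orderOf σ = n)
    (hgen : ∀ g : G, g ∈ Subgroup.zpowers σ) (hn1 : n = 1) (g : G) : g = 1 := by
  obtain ⟨x, rfl⟩ := Subgroup.mem_zpowers_iff.mp (hgen g)
  have : σ = 1 := orderOf_eq_one_iff.mp (by rw [hord, hn1])
  rw [this, one_zpow]

lemma exists_powAut (hn : 0 < n) (hord : orderOf σ = n)
    (hgen : ∀ g : G, g ∈ Subgroup.zpowers σ) {j : ℕ} (hj : Nat.gcd j n = 1) :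
    ∃ ψ : MulAut G, ψ σ = σ ^ j := by
  haveI : NeZero n := ⟨hn.ne'⟩
  obtain ⟨k, hk⟩ : ∃ k, j * k ≡ 1 [MOD n] := by
    set u := ZMod.unitOfCoprime j hj with hu
    refine ⟨((u⁻¹ : (ZMod n)ˣ) : ZMod n).val, ?_⟩
    rw [← ZMod.natCast_eq_natCast_iff, Nat.cast_mul, Nat.cast_one, ZMod.natCast_val,
      ZMod.cast_id]
    rw [show ((j : ℕ) : ZMod n) = (u : ZMod n) from (ZMod.coe_unitOfCoprime j hj).symm]
    exact u.mul_inv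
  have hpow : ∀ (s t : ℕ), s * t ≡ 1 [MOD n] → ∀ g : G, (g ^ s) ^ t = g := by
    intro s t hst g
    rw [← pow_mul]
    have hd : s * t = n * (s * t / n) + s * t % n := (Nat.div_add_mod _ _).symm
    rw [hd, pow_add, pow_mul, pow_n_eq_one σ n hord hgen, one_pow, one_mul]
    rcases Nat.lt_or_ge 1 n with h1 | h1
    · rw [Nat.ModEq] at hst
      rw [hst, Nat.mod_eq_of_lt h1, pow_one]
    · have hn1 : n = 1 := by omega
      rw [eq_one_of_n_eq_one σ n hord hgen hn1 g, one_pow]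
  refine ⟨MulEquiv.mk ⟨(· ^ j), (· ^ k), fun g => hpow j k hk g,
      fun g => hpow k j (by rwa [Nat.mul_comm] at hk) g⟩
      (fun a b => Commute.mul_pow (gen_comm σ hgen a b) j), rfl⟩

lemma coprime_phi_of_aut (hn : 0 < n) (hord : orderOf σ = n)
    (hgen : ∀ g : G, g ∈ Subgroup.zpowers σ) (ψ : MulAut G) :
    Nat.gcd (phi σ n (ψ σ)) n = 1 := by
  have hfin : IsOfFinOrder σ := by
    by_contra hc
    have := orderOf_eq_zero hc
    omega
  have hψσ : orderOf (ψ σ) = n := by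
    rw [← hord]
    exact orderOf_injective ψ.toMonoidHom ψ.injective σ
  have hpow : σ ^ (phi σ n (ψ σ)) = ψ σ := pow_phi hn hord (hgen (ψ σ))
  have h2 : orderOf (σ ^ (phi σ n (ψ σ))) = n := by rw [hpow, hψσ]
  rw [hfin.orderOf_pow, hord] at h2
  set d := Nat.gcd n (phi σ n (ψ σ)) with hd
  have hdvd : d ∣ n := Nat.gcd_dvd_left _ _
  have hdpos : 0 < d := Nat.gcd_pos_of_pos_left _ hn
  have hmul := Nat.div_mul_cancel hdvd
  rw [h2] at hmul
  rw [Nat.gcd_comm]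
  nlinarith

lemma Qf_pullback (hn2 : 2 ≤ n) (hord : orderOf σ = n)
    (hgen : ∀ g : G, g ∈ Subgroup.zpowers σ) (ψ : MulAut G) {f : G → G → Fˣ}
    (hf : IsTwoCocycle (1 : G →* RingAut F) f) :
    ∃ z : Fˣ, Qf σ (fun g g' => f (ψ g) (ψ g')) n
      = (Qf σ f n) ^ (phi σ n (ψ σ)) * z ^ n := by
  have hn : 0 < n := by omega
  set a := Qf σ f n with ha
  have hcob := normal_form σ n hn hord hgen hf
  have hcob2 := pullback_coboundary ψ hcob
  have hcob3 : IsTwoCoboundary (1 : G →* RingAut F)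
      ((fun g g' => f (ψ g) (ψ g')) * (fun g g' => fa σ n a (ψ g) (ψ g'))⁻¹) := hcob2
  obtain ⟨z, hz⟩ := Qf_eq_of_coboundary σ n hord hcob3
  refine ⟨z, ?_⟩
  rw [hz]
  congr 1
  have : Qf σ (fun g g' => fa σ n a (ψ g) (ψ g')) n
      = ∏ t ∈ Finset.range n, fa σ n a ((ψ σ) ^ t) (ψ σ) := by
    rw [Qf]
    exact Finset.prod_congr rfl (fun t _ => by rw [map_pow])
  rw [this, prod_fa_pow σ n hn hord hgen]
lemma fa_mul (x y : Fˣ) : fa σ n (x * y) = fa σ n x * fa σ n y := by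
  funext g h
  simp [fa, mul_pow]

/-- The relation on `Fˣ` mirroring the pullback action. -/
def SRel (n : ℕ) (x y : Fˣ) : Prop := ∃ j : ℕ, Nat.gcd j n = 1 ∧ ∃ z : Fˣ, y = x ^ j * z ^ n

lemma coboundary_of_Qf_eq (hn2 : 2 ≤ n) (hord : orderOf σ = n)
    (hgen : ∀ g : G, g ∈ Subgroup.zpowers σ) {u v : G → G → Fˣ}
    (hu : IsTwoCocycle (1 : G →* RingAut F) u) (hv : IsTwoCocycle (1 : G →* RingAut F) v)
    (w : Fˣ) (hQ : Qf σ u n = Qf σ v n * w ^ n) :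
    u * v⁻¹ ∈ twoCoboundaries (1 : G →* RingAut F) := by
  have hn : 0 < n := by omega
  have h1 : u * (fa σ n (Qf σ u n))⁻¹ ∈ twoCoboundaries (1 : G →* RingAut F) :=
    normal_form σ n hn hord hgen hu
  have h2 : v * (fa σ n (Qf σ v n))⁻¹ ∈ twoCoboundaries (1 : G →* RingAut F) :=
    normal_form σ n hn hord hgen hv
  have h3 : fa σ n (w ^ n) ∈ twoCoboundaries (1 : G →* RingAut F) := by
    refine isTwoCoboundary_of_units (fun g => w ^ (phi σ n g)) ?_
    intro g h
    have hadd := phi_add_eq hn hord hgen g h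
    have : w ^ (phi σ n g) * w ^ (phi σ n h) = (w ^ n) ^ (ee σ n g h) * w ^ (phi σ n (g * h)) := by
      rw [← pow_add, ← pow_mul, ← pow_add, hadd]
    rw [show fa σ n (w ^ n) g h = (w ^ n) ^ ee σ n g h from rfl, eq_mul_inv_iff_mul_eq]
    exact this.symm
  rw [hQ] at h1
  have m := mul_mem (mul_mem h1 h3) (inv_mem h2)
  convert m using 1
  funext g h
  simp only [Pi.mul_apply, Pi.inv_apply]
  refine Units.ext ?_
  push_cast [fa]
  field_simp
  ring

lemma SRel_of_coboundary (hord : orderOf σ = n) {f₁ f₂ : G → G → Fˣ}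
    (hd : IsTwoCoboundary (1 : G →* RingAut F) (f₁ * f₂⁻¹)) :
    SRel n (Qf σ f₂ n) (Qf σ f₁ n) := by
  obtain ⟨z, hz⟩ := Qf_eq_of_coboundary σ n hord hd
  exact ⟨1, Nat.gcd_one_left n, z, by rw [hz, pow_one]⟩

noncomputable def theta0 (f : twoCocycles (1 : G →* RingAut F)) : Quot (SRel (F := F) n) :=
  Quot.mk _ (Qf σ (f : G → G → Fˣ) n)

noncomputable def thetaH (hord : orderOf σ = n) :
    H2 (1 : G →* RingAut F) → Quot (SRel (F := F) n) :=
  Quotient.lift (theta0 σ n) (by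
    intro a b hab
    replace hab := QuotientGroup.leftRel_apply.mp hab
    rw [Subgroup.mem_subgroupOf] at hab
    have hab' : IsTwoCoboundary (1 : G →* RingAut F) ((b : G → G → Fˣ) * (a : G → G → Fˣ)⁻¹) := by
      have hc : ((a⁻¹ * b : twoCocycles (1 : G →* RingAut F)) : G → G → Fˣ)
          = (b : G → G → Fˣ) * (a : G → G → Fˣ)⁻¹ := by
        push_cast
        rw [mul_comm]
      rwa [hc] at hab
    exact Quot.sound (SRel_of_coboundary σ n hord hab'))

noncomputable def Theta (hn2 : 2 ≤ n) (hord : orderOf σ = n)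
    (hgen : ∀ g : G, g ∈ Subgroup.zpowers σ) :
    Quot (pullbackRel (1 : G →* RingAut F)) → Quot (SRel (F := F) n) :=
  Quot.lift (thetaH σ n hord) (by
    rintro c₁ c₂ ⟨ψ, -, f, hf, hf', rfl, rfl⟩
    show Quot.mk _ (Qf σ f n) = Quot.mk _ (Qf σ (fun g g' => f (ψ g) (ψ g')) n)
    obtain ⟨z, hz⟩ := Qf_pullback σ n hn2 hord hgen ψ hf
    exact Quot.sound ⟨phi σ n (ψ σ),
      coprime_phi_of_aut σ n (by omega) hord hgen ψ, z, hz⟩)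

/-- The class of the standard cocycle. -/
noncomputable def mkC (hn : 0 < n) (hord : orderOf σ = n)
    (hgen : ∀ g : G, g ∈ Subgroup.zpowers σ) (x : Fˣ) : H2 (1 : G →* RingAut F) :=
  QuotientGroup.mk ⟨fa σ n x, fa_cocycle σ n hn hord hgen x⟩

noncomputable def InvTheta (hn2 : 2 ≤ n) (hord : orderOf σ = n)
    (hgen : ∀ g : G, g ∈ Subgroup.zpowers σ) :
    Quot (SRel (F := F) n) → Quot (pullbackRel (1 : G →* RingAut F)) :=
  Quot.lift (fun x => Quot.mk _ (mkC σ n (by omega) hord hgen x)) (by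
    have hn : 0 < n := by omega
    rintro x y ⟨j, hj, z, rfl⟩
    obtain ⟨ψ, hψ⟩ := exists_powAut σ n hn hord hgen hj
    set Fy : twoCocycles (1 : G →* RingAut F) :=
      ⟨fa σ n (x ^ j * z ^ n), fa_cocycle σ n hn hord hgen (x ^ j * z ^ n)⟩ with hFy
    set Fu : twoCocycles (1 : G →* RingAut F) :=
      ⟨fun g g' => fa σ n x (ψ g) (ψ g'),
        pullback_cocycle ψ (fa_cocycle σ n hn hord hgen x)⟩ with hFu
    refine Quot.sound ⟨ψ, fun g => rfl, fa σ n x, fa_cocycle σ n hn hord hgen x,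
      pullback_cocycle ψ (fa_cocycle σ n hn hord hgen x), rfl, ?_⟩
    show QuotientGroup.mk Fy = QuotientGroup.mk Fu
    rw [QuotientGroup.eq, Subgroup.mem_subgroupOf]
    have hcoe : ((Fy⁻¹ * Fu : twoCocycles (1 : G →* RingAut F)) : G → G → Fˣ)
        = (fun g g' => fa σ n x (ψ g) (ψ g')) * (fa σ n (x ^ j * z ^ n))⁻¹ := by
      rw [hFy, hFu]
      push_cast
      rw [mul_comm]
    rw [hcoe]
    obtain ⟨z₁, hz₁⟩ := Qf_pullback σ n hn2 hord hgen ψ (fa_cocycle σ n hn hord hgen x)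
    have hQu : Qf σ (fun g g' => fa σ n x (ψ g) (ψ g')) n
        = Qf σ (fa σ n (x ^ j * z ^ n)) n * (z₁ * (x ^ (j / n) * z)⁻¹) ^ n := by
      rw [hz₁, Qf_fa σ n hn2 hord hgen, hψ, phi_pow hn hord, Qf_fa σ n hn2 hord hgen]
      have hxj : x ^ j = (x ^ (j / n)) ^ n * x ^ (j % n) := by
        rw [← pow_mul, ← pow_add, Nat.mul_comm, Nat.div_add_mod]
      rw [hxj]
      refine Units.ext ?_
      push_cast
      field_simp
      rw [div_pow, mul_pow]
      field_simp
    exact coboundary_of_Qf_eq σ n hn2 hord hgen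
      (pullback_cocycle ψ (fa_cocycle σ n hn hord hgen x))
      (fa_cocycle σ n hn hord hgen (x ^ j * z ^ n)) _ hQu)

lemma Theta_InvTheta (hn2 : 2 ≤ n) (hord : orderOf σ = n)
    (hgen : ∀ g : G, g ∈ Subgroup.zpowers σ) (q : Quot (SRel (F := F) n)) :
    Theta σ n hn2 hord hgen (InvTheta σ n hn2 hord hgen q) = q := by
  induction q using Quot.ind with
  | mk x =>
    show Quot.mk _ (Qf σ (fa σ n x) n) = Quot.mk _ x
    rw [Qf_fa σ n hn2 hord hgen]

lemma InvTheta_Theta (hn2 : 2 ≤ n) (hord : orderOf σ = n)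
    (hgen : ∀ g : G, g ∈ Subgroup.zpowers σ)
    (c : Quot (pullbackRel (1 : G →* RingAut F))) :
    InvTheta σ n hn2 hord hgen (Theta σ n hn2 hord hgen c) = c := by
  have hn : 0 < n := by omega
  induction c using Quot.ind with
  | mk c =>
    induction c using Quotient.inductionOn with
    | h f =>
      show Quot.mk _ (mkC σ n hn hord hgen (Qf σ (f : G → G → Fˣ) n)) = _
      congr 1
      rw [mkC, QuotientGroup.eq, Subgroup.mem_subgroupOf]
      set Fx : twoCocycles (1 : G →* RingAut F) :=
        ⟨fa σ n (Qf σ (f : G → G → Fˣ) n),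
          fa_cocycle σ n hn hord hgen (Qf σ (f : G → G → Fˣ) n)⟩ with hFx
      have hcoe : ((Fx⁻¹ * f : twoCocycles (1 : G →* RingAut F)) : G → G → Fˣ)
          = (f : G → G → Fˣ) * (fa σ n (Qf σ (f : G → G → Fˣ) n))⁻¹ := by
        rw [hFx]
        push_cast
        rw [mul_comm]
      rw [hcoe]
      exact normal_form σ n hn hord hgen f.2

noncomputable def E1 (hn2 : 2 ≤ n) (hord : orderOf σ = n)
    (hgen : ∀ g : G, g ∈ Subgroup.zpowers σ) :
    Quot (pullbackRel (1 : G →* RingAut F)) ≃ Quot (SRel (F := F) n) :=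
  ⟨Theta σ n hn2 hord hgen, InvTheta σ n hn2 hord hgen,
    InvTheta_Theta σ n hn2 hord hgen, Theta_InvTheta σ n hn2 hord hgen⟩

end CocycleSec
section DivisorsSec

/-- The scalar-multiplication relation on `ZMod m`. -/
def relZ (n m : ℕ) (a b : ZMod m) : Prop :=
  ∃ j : ℕ, Nat.gcd j n = 1 ∧ b = (j : ZMod m) * a

lemma gcd_mod_left (x m : ℕ) : Nat.gcd (x % m) m = Nat.gcd x m := by
  rw [← Nat.gcd_rec]
  exact Nat.gcd_comm m x

lemma relZ_gcd_eq {n m : ℕ} (hm : 0 < m) (hmn : m ∣ n) {a b : ZMod m}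
    (h : relZ n m a b) : Nat.gcd a.val m = Nat.gcd b.val m := by
  haveI : NeZero m := ⟨hm.ne'⟩
  obtain ⟨j, hj, rfl⟩ := h
  have hcast : (((j * a.val : ℕ)) : ZMod m) = (((j : ZMod m) * a).val : ZMod m) := by
    rw [ZMod.natCast_val, ZMod.cast_id]
    push_cast [ZMod.natCast_val, ZMod.cast_id]
    rfl
  have hmod : j * a.val ≡ ((j : ZMod m) * a).val [MOD m] :=
    (ZMod.natCast_eq_natCast_iff _ _ _).mp hcast
  have hjm : Nat.Coprime j m := Nat.Coprime.coprime_dvd_right hmn hj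
  calc Nat.gcd a.val m = Nat.gcd (j * a.val) m := (hjm.gcd_mul_left_cancel a.val).symm
    _ = Nat.gcd ((j * a.val) % m) m := (gcd_mod_left _ _).symm
    _ = Nat.gcd (((j : ZMod m) * a).val % m) m := by rw [Nat.ModEq] at hmod; rw [hmod]
    _ = Nat.gcd (((j : ZMod m) * a).val) m := gcd_mod_left _ _

lemma relZ_of_gcd_eq {n m : ℕ} (hn : 0 < n) (hm : 0 < m) (hmn : m ∣ n) {a b : ZMod m}
    (h : Nat.gcd a.val m = Nat.gcd b.val m) : relZ n m a b := by
  haveI : NeZero m := ⟨hm.ne'⟩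
  haveI : NeZero n := ⟨hn.ne'⟩
  set d := Nat.gcd a.val m with hd
  have hdpos : 0 < d := Nat.gcd_pos_of_pos_right _ hm
  have hda : d ∣ a.val := Nat.gcd_dvd_left _ _
  have hdb : d ∣ b.val := h ▸ Nat.gcd_dvd_left _ _
  have hdm : d ∣ m := Nat.gcd_dvd_right _ _
  set m' := m / d with hm'
  set a' := a.val / d with ha'
  set b' := b.val / d with hb'
  have hca : Nat.Coprime a' m' := Nat.coprime_div_gcd_div_gcd hdpos
  have hcb : Nat.Coprime b' m' := by
    rw [hb', hm', h]
    exact Nat.coprime_div_gcd_div_gcd (h ▸ hdpos)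
  have hm'n : m' ∣ n := dvd_trans (Nat.div_dvd_of_dvd hdm) hmn
  set u := ZMod.unitOfCoprime a' hca with hu
  set v := ZMod.unitOfCoprime b' hcb with hv
  obtain ⟨w, hw⟩ := ZMod.unitsMap_surjective hm'n (v * u⁻¹)
  set j := ((w : (ZMod n)ˣ) : ZMod n).val with hj
  refine ⟨j, ZMod.val_coe_unit_coprime w, ?_⟩
  have hjm' : ((j : ℕ) : ZMod m') = ((v * u⁻¹ : (ZMod m')ˣ) : ZMod m') := by
    rw [hj, ZMod.natCast_val, ← hw, ZMod.unitsMap_def]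
    rfl
  have hmul : ((j * a' : ℕ) : ZMod m') = ((b' : ℕ) : ZMod m') := by
    push_cast
    rw [hjm']
    rw [show ((a' : ℕ) : ZMod m') = ((u : (ZMod m')ˣ) : ZMod m') from
      (ZMod.coe_unitOfCoprime a' hca).symm,
      show ((b' : ℕ) : ZMod m') = ((v : (ZMod m')ˣ) : ZMod m') from
      (ZMod.coe_unitOfCoprime b' hcb).symm]
    push_cast
    rw [mul_assoc]
    norm_num
  have hmodeq : j * a' ≡ b' [MOD m'] := (ZMod.natCast_eq_natCast_iff _ _ _).mp hmul
  have hfin : j * a.val ≡ b.val [MOD m] := by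
    have h1 : d * (j * a') ≡ d * b' [MOD d * m'] := hmodeq.mul_left' (c := d)
    rw [Nat.mul_div_cancel' hdm] at h1
    have e1 : d * (j * a') = j * a.val := by
      rw [mul_left_comm, Nat.mul_div_cancel' hda]
    have e2 : d * b' = b.val := Nat.mul_div_cancel' hdb
    rwa [e1, e2] at h1
  have : ((j * a.val : ℕ) : ZMod m) = ((b.val : ℕ) : ZMod m) :=
    (ZMod.natCast_eq_natCast_iff _ _ _).mpr hfin
  rw [ZMod.natCast_val, ZMod.cast_id] at this
  push_cast [ZMod.natCast_val, ZMod.cast_id] at this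
  exact this.symm

end DivisorsSec
section E3Sec

lemma val_modeq_of_relZ {m : ℕ} (hm : 0 < m) {a b : ZMod m} {j : ℕ}
    (h : b = (j : ZMod m) * a) : b.val ≡ j * a.val [MOD m] := by
  haveI : NeZero m := ⟨hm.ne'⟩
  have hcast : ((b.val : ℕ) : ZMod m) = ((j * a.val : ℕ) : ZMod m) := by
    rw [ZMod.natCast_val, ZMod.cast_id, h]
    push_cast [ZMod.natCast_val, ZMod.cast_id]
    rfl
  exact (ZMod.natCast_eq_natCast_iff _ _ _).mp hcast

noncomputable def E3 (n m : ℕ) (hn : 0 < n) (hm : 0 < m) (hmn : m ∣ n) :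
    Quot (relZ n m) ≃ {d : ℕ // d ∈ m.divisors} := by
  haveI : NeZero m := ⟨hm.ne'⟩
  refine Equiv.ofBijective
    (Quot.lift (fun a : ZMod m => (⟨Nat.gcd a.val m,
        Nat.mem_divisors.mpr ⟨Nat.gcd_dvd_right _ _, hm.ne'⟩⟩ : {d : ℕ // d ∈ m.divisors}))
      (fun a b h => Subtype.ext (relZ_gcd_eq hm hmn h))) ⟨?_, ?_⟩
  · intro qa qb
    induction qa using Quot.ind with
    | mk a =>
      induction qb using Quot.ind with
      | mk b =>
        intro h
        have h' : Nat.gcd a.val m = Nat.gcd b.val m := congrArg Subtype.val h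
        exact Quot.sound (relZ_of_gcd_eq hn hm hmn h')
  · rintro ⟨d, hd⟩
    obtain ⟨hdvd, -⟩ := Nat.mem_divisors.mp hd
    refine ⟨Quot.mk _ ((d : ℕ) : ZMod m), Subtype.ext ?_⟩
    show Nat.gcd ((d : ZMod m)).val m = d
    rw [ZMod.val_natCast, gcd_mod_left]
    exact Nat.gcd_eq_left hdvd

end E3Sec

section E2Sec

variable {F : Type*} [Field F] (g : Fˣ) (N n : ℕ)

lemma bezout_pow (hN : 0 < N) (hNord : orderOf g = N) {k l : ℕ}
    (h : k ≡ l [MOD Nat.gcd N n]) : ∃ z : Fˣ, g ^ l = g ^ k * z ^ n := by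
  set m := Nat.gcd N n with hm
  have hmod : (k : ℤ) ≡ (l : ℤ) [ZMOD (m : ℤ)] := Int.natCast_modEq_iff.mpr h
  obtain ⟨s, hs⟩ : (m : ℤ) ∣ (l : ℤ) - (k : ℤ) := hmod.dvd
  set A := Nat.gcdA N n with hA
  set B := Nat.gcdB N n with hB
  have hbez : (m : ℤ) = N * A + n * B := Nat.gcd_eq_gcd_ab N n
  have hgN : g ^ (N : ℤ) = 1 := by
    rw [zpow_natCast, ← hNord, pow_orderOf_eq_one]
  refine ⟨g ^ (B * s), ?_⟩
  have hexp : (l : ℤ) = ((k : ℤ) + B * s * n) + N * (A * s) := by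
    linear_combination hs + s * hbez
  calc g ^ l = g ^ (l : ℤ) := (zpow_natCast g l).symm
    _ = g ^ (((k : ℤ) + B * s * n) + N * (A * s)) := by rw [← hexp]
    _ = g ^ ((k : ℤ) + B * s * n) * (g ^ (N : ℤ)) ^ (A * s) := by
        rw [zpow_add, zpow_mul]
    _ = g ^ ((k : ℤ) + B * s * n) := by rw [hgN, one_zpow, mul_one]
    _ = g ^ (k : ℤ) * (g ^ (B * s)) ^ (n : ℤ) := by rw [zpow_add, ← zpow_mul]
    _ = g ^ k * (g ^ (B * s)) ^ n := by rw [zpow_natCast, zpow_natCast]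

noncomputable def E2 (hN : 0 < N) (hn : 0 < n) (hNord : orderOf g = N)
    (hgen : ∀ x : Fˣ, x ∈ Subgroup.zpowers g) :
    Quot (SRel (F := F) n) ≃ Quot (relZ n (Nat.gcd N n)) := by
  set m := Nat.gcd N n with hm
  have hm0 : 0 < m := Nat.gcd_pos_of_pos_left _ hN
  haveI : NeZero m := ⟨hm0.ne'⟩
  have hmN : m ∣ N := Nat.gcd_dvd_left _ _
  have hmn : m ∣ n := Nat.gcd_dvd_right _ _
  refine ⟨Quot.lift (fun x => Quot.mk _ ((phi g N x : ℕ) : ZMod m)) ?_,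
    Quot.lift (fun a : ZMod m => Quot.mk _ (g ^ a.val)) ?_, ?_, ?_⟩
  · rintro x y ⟨j, hj, z, rfl⟩
    refine Quot.sound ⟨j, hj, ?_⟩
    have hpows : g ^ (phi g N (x ^ j * z ^ n)) = g ^ (j * phi g N x + n * phi g N z) := by
      rw [pow_phi hN hNord (hgen _), pow_add, mul_comm j _, mul_comm n _, pow_mul, pow_mul,
        pow_phi hN hNord (hgen x), pow_phi hN hNord (hgen z)]
    have hc := pow_eq_pow_iff_modEq.mp hpows
    rw [hNord] at hc
    have hc' : phi g N (x ^ j * z ^ n) ≡ j * phi g N x + n * phi g N z [MOD m] :=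
      Nat.ModEq.of_dvd hmN hc
    have : ((phi g N (x ^ j * z ^ n) : ℕ) : ZMod m)
        = ((j * phi g N x + n * phi g N z : ℕ) : ZMod m) :=
      (ZMod.natCast_eq_natCast_iff _ _ _).mpr hc'
    rw [this]
    push_cast
    rw [(ZMod.natCast_eq_zero_iff n m).mpr hmn]
    ring
  · rintro a b ⟨j, hj, hab⟩
    have hv := val_modeq_of_relZ hm0 hab
    obtain ⟨z, hz⟩ := bezout_pow g N n hN hNord hv.symm
    refine Quot.sound ⟨j, hj, z, ?_⟩
    rw [hz, mul_comm j _, pow_mul]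
  · -- left inverse : on Quot SRel
    intro q
    induction q using Quot.ind with
    | mk x =>
      show Quot.mk _ (g ^ (((phi g N x : ℕ) : ZMod m)).val) = Quot.mk _ x
      have hval : (((phi g N x : ℕ) : ZMod m)).val = phi g N x % m := ZMod.val_natCast _ _
      have hmodeq : phi g N x ≡ (((phi g N x : ℕ) : ZMod m)).val [MOD m] := by
        rw [hval]
        exact (Nat.mod_modEq _ _).symm
      obtain ⟨z, hz⟩ := bezout_pow g N n hN hNord hmodeq
      refine (Quot.sound ⟨1, Nat.gcd_one_left n, z, ?_⟩).symm
      rw [hz, pow_phi hN hNord (hgen x), pow_one]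
  · intro q
    induction q using Quot.ind with
    | mk a =>
      show Quot.mk _ ((phi g N (g ^ a.val) : ℕ) : ZMod m) = Quot.mk _ a
      congr 1
      rw [phi_pow hN hNord]
      have h1 : a.val % N ≡ a.val [MOD m] := Nat.ModEq.of_dvd hmN (Nat.mod_modEq _ _)
      have h2 := (ZMod.natCast_eq_natCast_iff _ _ _).mpr h1
      rw [h2, ZMod.natCast_val, ZMod.cast_id]

end E2Sec

section MainAux

variable {G F : Type*} [Group G] [Field F]

lemma coboundary_of_trivial (σ : G) (hord : orderOf σ = 1)
    (hgen : ∀ g : G, g ∈ Subgroup.zpowers σ) (d : G → G → Fˣ) :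
    IsTwoCoboundary (1 : G →* RingAut F) d := by
  refine isTwoCoboundary_of_units (fun _ => d 1 1) ?_
  intro g h
  rw [eq_one_of_n_eq_one σ 1 hord hgen rfl g, eq_one_of_n_eq_one σ 1 hord hgen rfl h]
  exact (mul_inv_cancel_right _ _).symm

lemma subsingleton_quot_pullback (σ : G) (hord : orderOf σ = 1)
    (hgen : ∀ g : G, g ∈ Subgroup.zpowers σ) :
    Subsingleton (Quot (pullbackRel (1 : G →* RingAut F))) := by
  constructor
  intro qa qb
  induction qa using Quot.ind with
  | mk a =>
    induction qb using Quot.ind with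
    | mk b =>
      refine Quot.sound ?_
      induction a using Quotient.inductionOn with
      | h f₁ =>
        induction b using Quotient.inductionOn with
        | h f₂ =>
          refine ⟨MulEquiv.refl G, fun g => rfl, (f₁ : G → G → Fˣ), f₁.2, f₁.2, rfl, ?_⟩
          show QuotientGroup.mk f₂ = QuotientGroup.mk (⟨(f₁ : G → G → Fˣ), f₁.2⟩ :
            twoCocycles (1 : G →* RingAut F))
          rw [QuotientGroup.eq, Subgroup.mem_subgroupOf]
          exact coboundary_of_trivial σ hord hgen _

end MainAux


/-- let `F = F_{q^r}` carry the trivial action of the cyclic group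
`C_n = ⟨σ⟩`, and set `m = gcd(q^r - 1, n)`. Then (i) the quotient of `ℤ/mℤ` by the
relation `a ∼ b` iff `b = j·a` for some `j` coprime to `n` is in bijection with the
set of positive divisors of `m`; consequently (ii) the orbits of the pullback action
of `Aut(C_n)` on `H²(C_n, F^*)` are in one-to-one correspondence with the positive
divisors of `gcd(q^r - 1, n)`. -/
theorem trivial_action_orbits_equiv_divisors {G F : Type*} [Group G] [Field F]
    [Fintype F]
    (q r n : ℕ) (hq : q.Prime) (hr : 0 < r) (hn : 0 < n)
    (hF : Fintype.card F = q ^ r)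
    (σ : G) (hgen : ∀ g : G, g ∈ Subgroup.zpowers σ) (hord : orderOf σ = n) :
    Nonempty (Quot (fun a b : ZMod (Nat.gcd (q ^ r - 1) n) =>
        ∃ j : ℕ, Nat.gcd j n = 1 ∧ b = (j : ZMod _) * a) ≃
      {d : ℕ // d ∈ (Nat.gcd (q ^ r - 1) n).divisors}) ∧
    Nonempty (Quot (pullbackRel (1 : G →* RingAut F)) ≃
      {d : ℕ // d ∈ (Nat.gcd (q ^ r - 1) n).divisors}) := by
  classical
  have hq2 : 2 ≤ q := hq.two_le
  have hqr : 2 ≤ q ^ r := by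
    calc 2 = 2 ^ 1 := rfl
    _ ≤ q ^ r := Nat.pow_le_pow_left hq2 r |>.trans' (by
        exact Nat.pow_le_pow_right (by omega) hr)
  have hN : 0 < q ^ r - 1 := by omega
  have hm0 : 0 < Nat.gcd (q ^ r - 1) n := Nat.gcd_pos_of_pos_right _ hn
  have hmn : Nat.gcd (q ^ r - 1) n ∣ n := Nat.gcd_dvd_right _ _
  have e3 := E3 n (Nat.gcd (q ^ r - 1) n) hn hm0 hmn
  refine ⟨⟨e3⟩, ?_⟩
  -- a generator of Fˣ
  haveI : Fintype Fˣ := Fintype.ofFinite _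
  obtain ⟨g, hgenF⟩ := IsCyclic.exists_generator (α := Fˣ)
  have hNord : orderOf g = q ^ r - 1 := by
    rw [orderOf_eq_card_of_forall_mem_zpowers hgenF, Nat.card_units, Nat.card_eq_fintype_card, hF]
  rcases Nat.lt_or_ge n 2 with hn1 | hn2
  · -- n = 1 : everything degenerate
    have hn1' : n = 1 := by omega
    subst hn1'
    haveI hsub := subsingleton_quot_pullback (F := F) σ hord hgen
    haveI : Subsingleton {d : ℕ // d ∈ (Nat.gcd (q ^ r - 1) 1).divisors} := by
      constructor
      rintro ⟨a, ha⟩ ⟨b, hb⟩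
      rw [Nat.gcd_one_right] at ha hb
      have ha' := (Nat.mem_divisors.mp ha).1
      have hb' := (Nat.mem_divisors.mp hb).1
      simp only [Nat.dvd_one] at ha' hb'
      exact Subtype.ext (ha'.trans hb'.symm)
    exact ⟨equivOfSubsingletonOfSubsingleton
      (fun _ => ⟨1, by rw [Nat.gcd_one_right]; exact Nat.mem_divisors_self 1 one_ne_zero⟩)
      (fun _ => Quot.mk _ (1 : H2 (1 : G →* RingAut F)))⟩
  · exact ⟨((E1 σ n hn2 hord hgen).trans
      (E2 g (q ^ r - 1) n hN hn hNord hgenF)).trans e3⟩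
end

section
/- Let G be a finite abelian group acting trivially on ℂ^*. Two 2-cocycles f_1, f_2 : G × G → ℂ^* are cohomologous if and only if they yield the same alternating bicharacter, i.e., f_1(g,h) · f_1(h,g)^{-1} = f_2(g,h) · f_2(h,g)^{-1} for all g, h ∈ G. -/
open CategoryTheory

/-- 2-cocycle condition for a trivial action, with values in a commutative group `M`. -/
def IsTwoCocycleTriv {G M : Type*} [Group G] [CommGroup M] (f : G → G → M) : Prop :=
  ∀ g h k : G, f h k * f g (h * k) = f g h * f (g * h) k

/-- 2-coboundary condition for a trivial action. -/
def IsTwoCoboundaryTriv {G M : Type*} [Group G] [CommGroup M] (f : G → G → M) : Prop :=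
  ∃ r : G → M, ∀ g h : G, f g h = r g * r h * (r (g * h))⁻¹

/-- Two 2-cocycles are cohomologous if their pointwise ratio is a 2-coboundary. -/
def CohomologousTriv {G M : Type*} [Group G] [CommGroup M] (f₁ f₂ : G → G → M) : Prop :=
  IsTwoCoboundaryTriv fun g h => f₁ g h * (f₂ g h)⁻¹

lemma mul_inv_eq_mul_inv_iff_aux {M : Type*} [CommGroup M] (a b c d : M) :
    a * b⁻¹ = c * d⁻¹ ↔ a * d = c * b := by
  rw [mul_inv_eq_iff_eq_mul, mul_right_comm, eq_mul_inv_iff_mul_eq]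

noncomputable instance : RootableBy ℂˣ ℕ :=
  rootableByOfPowLeftSurj ℂˣ ℕ fun {n} hn z => by
    obtain ⟨w, hw⟩ := IsAlgClosed.exists_pow_nat_eq (k := ℂ) (z : ℂ) (Nat.pos_of_ne_zero hn)
    have hw0 : w ≠ 0 := by
      intro h0; apply z.ne_zero; rw [← hw, h0, zero_pow hn]
    exact ⟨Units.mk0 w hw0, by ext; simpa using hw⟩

noncomputable instance : RootableBy ℂˣ ℤ := Group.rootableByIntOfRootableByNat ℂˣ

noncomputable instance : DivisibleBy (Additive ℂˣ) ℤ where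
  div a n := Additive.ofMul (RootableBy.root a.toMul n)
  div_zero a := congrArg Additive.ofMul (RootableBy.root_zero a.toMul)
  div_cancel a hn := by
    apply Additive.toMul.injective
    rw [toMul_zsmul]
    exact RootableBy.root_cancel _ hn

/-- The central extension of `G` by `ℂˣ` determined by a 2-cocycle `c`. -/
@[ext] structure ExtC (G : Type*) (c : G → G → ℂˣ) where
  g : G
  u : ℂˣ

/-- The commutative group structure on the central extension determined by a normalized
symmetric 2-cocycle. -/
def extCommGroup {G : Type*} [CommGroup G] (c : G → G → ℂˣ) (hc : IsTwoCocycleTriv c)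
    (hs : ∀ g h, c g h = c h g) (h1 : ∀ g, c 1 g = 1) (h1' : ∀ g, c g 1 = 1) :
    CommGroup (ExtC G c) where
  mul x y := ⟨x.g * y.g, x.u * y.u * c x.g y.g⟩
  one := ⟨1, 1⟩
  inv x := ⟨x.g⁻¹, x.u⁻¹ * (c x.g x.g⁻¹)⁻¹⟩
  mul_assoc x y z := by
    refine ExtC.ext ?_ ?_
    · exact mul_assoc _ _ _
    · show x.u * y.u * c x.g y.g * z.u * c (x.g * y.g) z.g
        = x.u * (y.u * z.u * c y.g z.g) * c x.g (y.g * z.g)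
      have h := hc x.g y.g z.g
      calc x.u * y.u * c x.g y.g * z.u * c (x.g * y.g) z.g
          = x.u * y.u * z.u * (c x.g y.g * c (x.g * y.g) z.g) := by
            simp only [mul_comm, mul_left_comm, mul_assoc]
        _ = x.u * y.u * z.u * (c y.g z.g * c x.g (y.g * z.g)) := by rw [← h]
        _ = x.u * (y.u * z.u * c y.g z.g) * c x.g (y.g * z.g) := by
            simp only [mul_comm, mul_left_comm, mul_assoc]
  one_mul x := by
    refine ExtC.ext ?_ ?_
    · exact one_mul _
    · show 1 * x.u * c 1 x.g = x.u
      rw [h1, one_mul, mul_one]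
  mul_one x := by
    refine ExtC.ext ?_ ?_
    · exact mul_one _
    · show x.u * 1 * c x.g 1 = x.u
      rw [h1', mul_one, mul_one]
  inv_mul_cancel x := by
    refine ExtC.ext ?_ ?_
    · exact inv_mul_cancel _
    · show x.u⁻¹ * (c x.g x.g⁻¹)⁻¹ * x.u * c x.g⁻¹ x.g = 1
      rw [hs x.g⁻¹ x.g, mul_right_comm, mul_assoc x.u⁻¹, inv_mul_cancel, mul_one, inv_mul_cancel]
  mul_comm x y := by
    refine ExtC.ext ?_ ?_
    · exact mul_comm _ _
    · show x.u * y.u * c x.g y.g = y.u * x.u * c y.g x.g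
      rw [mul_comm x.u, hs x.g]

universe u

/-- A *normalized* symmetric 2-cocycle on an abelian group with values in `ℂˣ`
is a coboundary. -/
theorem norm_symm_cocycle_coboundary {G : Type u} [CommGroup G] (c : G → G → ℂˣ)
    (hc : IsTwoCocycleTriv c) (hs : ∀ g h, c g h = c h g)
    (h1 : ∀ g, c 1 g = 1) (h1' : ∀ g, c g 1 = 1) : IsTwoCoboundaryTriv c := by
  letI : CommGroup (ExtC G c) := extCommGroup c hc hs h1 h1'
  have hmul : ∀ x y : ExtC G c, x * y = ⟨x.g * y.g, x.u * y.u * c x.g y.g⟩ := fun _ _ => rfl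
  -- the inclusion of `ℂˣ` (lifted to the right universe) into the extension
  let ι : ULift.{u} (Additive ℂˣ) →+ Additive (ExtC G c) :=
    { toFun := fun a => Additive.ofMul (ExtC.mk 1 a.down.toMul : ExtC G c)
      map_zero' := rfl
      map_add' := fun a b => by
        apply congrArg Additive.ofMul
        refine (ExtC.ext ?_ ?_).symm
        · exact one_mul 1
        · show a.down.toMul * b.down.toMul * c 1 1 = (a + b).down.toMul
          rw [h1 1, mul_one]; rfl }
  haveI : Injective (AddCommGrpCat.of (ULift.{u} (Additive ℂˣ))) :=
    AddCommGrpCat.injective_of_divisible _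
  let ιbar : AddCommGrpCat.of (ULift.{u} (Additive ℂˣ)) ⟶ AddCommGrpCat.of (Additive (ExtC G c)) :=
    AddCommGrpCat.ofHom ι
  haveI : Mono ιbar := (AddCommGrpCat.mono_iff_injective _).mpr (by
    intro a b hab
    have h2 : (ExtC.mk 1 a.down.toMul : ExtC G c).u = (ExtC.mk 1 b.down.toMul : ExtC G c).u :=
      congrArg ExtC.u (congrArg Additive.toMul hab)
    exact ULift.ext _ _ (Additive.toMul.injective h2))
  let φ := Injective.factorThru (𝟙 (AddCommGrpCat.of (ULift.{u} (Additive ℂˣ)))) ιbar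
  have hφ : ιbar ≫ φ = 𝟙 _ := Injective.comp_factorThru _ _
  have hid : ∀ a : ℂˣ,
      (φ (Additive.ofMul (ExtC.mk 1 a : ExtC G c))).down.toMul = a := by
    intro a
    have h3 := DFunLike.congr_fun (congrArg AddCommGrpCat.Hom.hom hφ) (ULift.up (Additive.ofMul a))
    exact congrArg (fun z => Additive.toMul (ULift.down z)) h3
  refine ⟨fun g => (φ (Additive.ofMul (ExtC.mk g 1 : ExtC G c))).down.toMul, fun g h => ?_⟩
  have key : (ExtC.mk g (1:ℂˣ) : ExtC G c) * ExtC.mk h 1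
      = ExtC.mk (g*h) 1 * ExtC.mk 1 (c g h) := by
    rw [hmul, hmul]
    refine ExtC.ext ?_ ?_
    · exact (mul_one (g*h)).symm
    · show (1:ℂˣ) * 1 * c g h = 1 * c g h * c (g*h) 1
      rw [h1' (g*h), one_mul, one_mul, mul_one]
  have happ : ∀ x y : ExtC G c,
      (φ (Additive.ofMul (x * y))).down.toMul
        = (φ (Additive.ofMul x)).down.toMul * (φ (Additive.ofMul y)).down.toMul := by
    intro x y
    calc (φ (Additive.ofMul (x * y))).down.toMul
        = (φ (Additive.ofMul x + Additive.ofMul y)).down.toMul := rfl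
      _ = _ := by rw [map_add]; rfl
  have hrel := happ (ExtC.mk g 1) (ExtC.mk h 1)
  rw [key, happ, hid (c g h)] at hrel
  beta_reduce
  rw [← hrel, mul_comm _ (c g h), mul_assoc, mul_inv_cancel, mul_one]

/-- A symmetric 2-cocycle on an abelian group with values in `ℂˣ` is a coboundary. -/
theorem symm_cocycle_coboundary {G : Type u} [CommGroup G] (c : G → G → ℂˣ)
    (hc : IsTwoCocycleTriv c) (hs : ∀ g h, c g h = c h g) : IsTwoCoboundaryTriv c := by
  have hone : ∀ g k : G, c 1 k = c g 1 := by
    intro g k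
    have h5 := hc g 1 k
    rw [one_mul, mul_one] at h5
    exact mul_right_cancel h5
  have he1 : ∀ k : G, c 1 k = c 1 1 := fun k => (hone 1 k).trans (hone 1 1).symm
  have he2 : ∀ g : G, c g 1 = c 1 1 := fun g => (hone g 1).symm
  set e := c 1 1 with he
  set c' : G → G → ℂˣ := fun g h => c g h * e⁻¹ with hc'def
  have hc' : IsTwoCocycleTriv c' := by
    intro g h k
    show c h k * e⁻¹ * (c g (h * k) * e⁻¹) = c g h * e⁻¹ * (c (g * h) k * e⁻¹)
    calc c h k * e⁻¹ * (c g (h * k) * e⁻¹) = c h k * c g (h * k) * (e⁻¹ * e⁻¹) := by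
          simp only [mul_comm, mul_left_comm, mul_assoc]
      _ = c g h * c (g * h) k * (e⁻¹ * e⁻¹) := by rw [hc g h k]
      _ = c g h * e⁻¹ * (c (g * h) k * e⁻¹) := by
          simp only [mul_comm, mul_left_comm, mul_assoc]
  have hs' : ∀ g h, c' g h = c' h g := fun g h => by
    show c g h * e⁻¹ = c h g * e⁻¹; rw [hs g h]
  have h1 : ∀ g, c' 1 g = 1 := fun g => by
    show c 1 g * e⁻¹ = 1; rw [he1 g, mul_inv_cancel]
  have h1' : ∀ g, c' g 1 = 1 := fun g => by
    show c g 1 * e⁻¹ = 1; rw [he2 g, mul_inv_cancel]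
  obtain ⟨r, hr⟩ := norm_symm_cocycle_coboundary c' hc' hs' h1 h1'
  refine ⟨fun g => r g * e, fun g h => ?_⟩
  have h6 := hr g h
  have h7 : c g h * e⁻¹ = r g * r h * (r (g * h))⁻¹ := h6
  calc c g h = c g h * e⁻¹ * e := by rw [inv_mul_cancel_right]
    _ = r g * r h * (r (g * h))⁻¹ * e := by rw [h7]
    _ = r g * e * (r h * e) * (r (g * h) * e)⁻¹ := by
        rw [mul_inv]
        simp only [mul_comm, mul_left_comm, mul_assoc, mul_inv_cancel, inv_mul_cancel,
          mul_one, one_mul, inv_mul_cancel_left, mul_inv_cancel_left]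
      
/-- two 2-cocycles on a finite abelian group `G` with values in `ℂ^*`
(trivial action) are cohomologous iff they yield the same alternating bicharacter
`α_f(g,h) = f(g,h)·f(h,g)⁻¹`. -/
theorem cohomologous_iff_same_bicharacter {G : Type*} [CommGroup G] [Finite G]
    (f₁ f₂ : G → G → ℂˣ) (h₁ : IsTwoCocycleTriv f₁) (h₂ : IsTwoCocycleTriv f₂) :
    CohomologousTriv f₁ f₂ ↔
      ∀ g h : G, f₁ g h * (f₁ h g)⁻¹ = f₂ g h * (f₂ h g)⁻¹ := by
  constructor
  · rintro ⟨r, hr⟩ g h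
    have e1 : f₁ g h * (f₂ g h)⁻¹ = r g * r h * (r (g * h))⁻¹ := hr g h
    have e2 : f₁ h g * (f₂ h g)⁻¹ = r h * r g * (r (h * g))⁻¹ := hr h g
    rw [mul_comm h g] at e2
    have h8 : f₁ g h * (f₂ g h)⁻¹ = f₁ h g * (f₂ h g)⁻¹ := by
      rw [e1, e2, mul_comm (r g) (r h)]
    rw [mul_inv_eq_mul_inv_iff_aux] at h8 ⊢
    rw [h8, mul_comm]
  · intro hα
    set c : G → G → ℂˣ := fun g h => f₁ g h * (f₂ g h)⁻¹ with hcdef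
    have hc : IsTwoCocycleTriv c := by
      intro g h k
      show f₁ h k * (f₂ h k)⁻¹ * (f₁ g (h * k) * (f₂ g (h * k))⁻¹)
          = f₁ g h * (f₂ g h)⁻¹ * (f₁ (g * h) k * (f₂ (g * h) k)⁻¹)
      calc f₁ h k * (f₂ h k)⁻¹ * (f₁ g (h * k) * (f₂ g (h * k))⁻¹)
          = f₁ h k * f₁ g (h * k) * (f₂ h k * f₂ g (h * k))⁻¹ := by
            rw [mul_inv]; simp only [mul_comm, mul_left_comm, mul_assoc]
        _ = f₁ g h * f₁ (g * h) k * (f₂ g h * f₂ (g * h) k)⁻¹ := by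
            rw [h₁ g h k, h₂ g h k]
        _ = f₁ g h * (f₂ g h)⁻¹ * (f₁ (g * h) k * (f₂ (g * h) k)⁻¹) := by
            rw [mul_inv]; simp only [mul_comm, mul_left_comm, mul_assoc]
    have hs : ∀ g h, c g h = c h g := by
      intro g h
      show f₁ g h * (f₂ g h)⁻¹ = f₁ h g * (f₂ h g)⁻¹
      rw [mul_inv_eq_mul_inv_iff_aux]
      have h9 := hα g h
      rw [mul_inv_eq_mul_inv_iff_aux] at h9
      rw [h9, mul_comm]
    exact symm_cocycle_coboundary c hc hs
end

section
/- Let p and q be primes, r and s positive integers, F_{q^r} the field with q^r elements, and let the elementary abelian group (C_p)^s act trivially on F_{q^r}^*. If p does not divide q^r − 1, then H²((C_p)^s, F_{q^r}^*) is trivial; if p divides q^r − 1, then H²((C_p)^s, F_{q^r}^*) is isomorphic to the elementary abelian p-group (C_p)^{s(s+1)/2} of rank binom(s+1, 2). -/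
section TrivialAction

variable {G F : Type*} [Group G] [Field F]

lemma isTwoCocycle_one_iff {f : G → G → Fˣ} :
    IsTwoCocycle (1 : G →* RingAut F) f ↔
      ∀ g h k : G, f h k * f g (h * k) = f g h * f (g * h) k := by
  constructor
  · intro H g h k
    apply Units.ext
    exact H g h k
  · intro H g h k
    have := congrArg Units.val (H g h k)
    push_cast at this ⊢
    exact this

lemma isTwoCoboundary_one_iff {f : G → G → Fˣ} :
    IsTwoCoboundary (1 : G →* RingAut F) f ↔
      ∃ r : G → Fˣ, ∀ g h : G, f g h = r g * r h * (r (g * h))⁻¹ := by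
  constructor
  · rintro ⟨r, hr⟩
    exact ⟨r, fun g h => Units.ext (hr g h)⟩
  · rintro ⟨r, hr⟩
    refine ⟨r, fun g h => ?_⟩
    have := congrArg Units.val (hr g h)
    push_cast at this ⊢
    exact this

lemma mem_twoCocycles_iff {f : G → G → Fˣ} :
    f ∈ twoCocycles (1 : G →* RingAut F) ↔
      ∀ g h k : G, f h k * f g (h * k) = f g h * f (g * h) k :=
  isTwoCocycle_one_iff

lemma mem_twoCoboundaries_iff {f : G → G → Fˣ} :
    f ∈ twoCoboundaries (1 : G →* RingAut F) ↔
      ∃ r : G → Fˣ, ∀ g h : G, f g h = r g * r h * (r (g * h))⁻¹ :=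
  isTwoCoboundary_one_iff

end TrivialAction

section Part1

variable {G F : Type*} [CommGroup G] [Fintype G] [Field F]

lemma pow_card_mem_twoCoboundaries {f : G → G → Fˣ}
    (hf : f ∈ twoCocycles (1 : G →* RingAut F)) :
    f ^ (Fintype.card G) ∈ twoCoboundaries (1 : G →* RingAut F) := by
  rw [mem_twoCoboundaries_iff]
  rw [mem_twoCocycles_iff] at hf
  refine ⟨fun x => ∏ k : G, f x k, fun g h => ?_⟩
  have h1 : (∏ k : G, f h k) * (∏ k : G, f g (h * k)) =
      (f g h) ^ (Fintype.card G) * ∏ k : G, f (g * h) k := by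
    rw [← Finset.prod_mul_distrib, Finset.prod_congr rfl (fun k _ => hf g h k),
      Finset.prod_mul_distrib, Finset.prod_const, Finset.card_univ]
  have h2 : ∏ k : G, f g (h * k) = ∏ k : G, f g k :=
    Fintype.prod_equiv (Equiv.mulLeft h) _ _ (fun k => rfl)
  rw [h2] at h1
  show (f g h) ^ (Fintype.card G) = _
  rw [eq_mul_inv_iff_mul_eq, ← h1, mul_comm]

lemma part1_card_one [Fintype F]
    (hcop : Nat.Coprime (Fintype.card G) (Nat.card Fˣ)) :
    Nat.card (H2 (1 : G →* RingAut F)) = 1 := by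
  have hle : twoCocycles (1 : G →* RingAut F) ≤ twoCoboundaries (1 : G →* RingAut F) := by
    intro f hf
    set m : ℕ := Fintype.card G
    set n : ℕ := Nat.card Fˣ
    have hfn0 : f ^ n = 1 := by
      funext g h
      show (f g h) ^ n = 1
      exact pow_card_eq_one'
    have hfn : f ^ (n : ℤ) = 1 := by rw [zpow_natCast, hfn0]
    have hbez : (m : ℤ) * Nat.gcdA m n + (n : ℤ) * Nat.gcdB m n = 1 := by
      have := Nat.gcd_eq_gcd_ab m n
      rw [hcop] at this
      push_cast at this
      linarith
    have : f = (f ^ (m : ℤ)) ^ Nat.gcdA m n * (f ^ (n : ℤ)) ^ Nat.gcdB m n := by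
      rw [← zpow_mul, ← zpow_mul, ← zpow_add, hbez, zpow_one]
    rw [this, hfn]
    simp only [one_zpow, mul_one]
    apply Subgroup.zpow_mem
    rw [zpow_natCast]
    exact pow_card_mem_twoCoboundaries hf
  have htop : (twoCoboundaries (1 : G →* RingAut F)).subgroupOf
      (twoCocycles (1 : G →* RingAut F)) = ⊤ := by
    rw [Subgroup.subgroupOf_eq_top]
    exact hle
  rw [H2, htop]
  haveI := QuotientGroup.subsingleton_quotient_top
    (G := twoCocycles (1 : G →* RingAut F))
  exact Nat.card_eq_one_iff_unique.mpr ⟨inferInstance, ⟨1⟩⟩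

end Part1
section Part2Basic

open Finset

variable (p : ℕ) [hp : Fact p.Prime] (s : ℕ)

local notation "GG" => (Fin s → Multiplicative (ZMod p))

/-- the natural-number value of an element of `Multiplicative (ZMod p)`. -/
def mval (u : Multiplicative (ZMod p)) : ℕ := (Multiplicative.toAdd u).val

/-- the carry in adding two elements of `ZMod p`. -/
def mcarry (u v : Multiplicative (ZMod p)) : ℕ := (mval p u + mval p v) / p

lemma mval_lt (u : Multiplicative (ZMod p)) : mval p u < p := ZMod.val_lt _

lemma mval_one : mval p (1 : Multiplicative (ZMod p)) = 0 := ZMod.val_zero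

lemma mval_mul (u v : Multiplicative (ZMod p)) :
    mval p (u * v) = (mval p u + mval p v) % p := ZMod.val_add _ _

lemma mval_carry (u v : Multiplicative (ZMod p)) :
    mval p u + mval p v = mval p (u * v) + p * mcarry p u v := by
  rw [mval_mul, mcarry]
  exact (Nat.mod_add_div _ _).symm

lemma mval_natCast (k : ℕ) :
    mval p (Multiplicative.ofAdd (k : ZMod p)) = k % p := ZMod.val_natCast p k

/-- basis vectors of `(C_p)^s`. -/
def gbasis (i : Fin s) : GG :=
  fun j => if j = i then Multiplicative.ofAdd 1 else 1

lemma gbasis_apply (i j : Fin s) :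
    gbasis p s i j = if j = i then Multiplicative.ofAdd (1 : ZMod p) else 1 := rfl

lemma gbasis_pow_apply (i j : Fin s) (k : ℕ) :
    ((gbasis p s i) ^ k) j =
      if j = i then Multiplicative.ofAdd ((k : ZMod p)) else 1 := by
  rw [Pi.pow_apply, gbasis_apply]
  split
  · rw [← ofAdd_nsmul]
    congr 1
    simp [nsmul_eq_mul]
  · simp

lemma mval_gbasis_pow (i j : Fin s) (k : ℕ) :
    mval p (((gbasis p s i) ^ k) j) = if j = i then k % p else 0 := by
  rw [gbasis_pow_apply]
  split
  · exact mval_natCast p k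
  · exact mval_one p

lemma mval_gbasis (i j : Fin s) :
    mval p (gbasis p s i j) = if j = i then 1 else 0 := by
  have := mval_gbasis_pow p s i j 1
  rw [pow_one] at this
  rw [this]
  rw [Nat.mod_eq_of_lt hp.out.one_lt]

lemma gbasis_expansion (x : GG) :
    x = ∏ i : Fin s, (gbasis p s i) ^ (mval p (x i)) := by
  funext j
  rw [Finset.prod_apply]
  rw [Finset.prod_congr rfl (fun i _ => gbasis_pow_apply p s i j (mval p (x i)))]
  rw [Finset.prod_ite_eq Finset.univ j (fun i => Multiplicative.ofAdd ((mval p (x i) : ZMod p)))]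
  simp only [Finset.mem_univ, if_true]
  show x j = Multiplicative.ofAdd (((Multiplicative.toAdd (x j)).val : ZMod p))
  rw [ZMod.natCast_val, ZMod.cast_id]
  rfl

lemma gbasis_pow_p (i : Fin s) : (gbasis p s i) ^ p = 1 := by
  funext j
  rw [gbasis_pow_apply]
  simp [ZMod.natCast_self]

lemma pow_p_eq_one (x : GG) : x ^ p = 1 := by
  funext j
  rw [Pi.pow_apply]
  show Multiplicative.ofAdd (p • Multiplicative.toAdd (x j)) = 1
  simp [nsmul_eq_mul, ZMod.natCast_self]

end Part2Basic
section BF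

open Finset

variable {F : Type*} [Field F]

/-- the commutator pairing of a 2-cocycle. -/
def bf {G : Type*} [Group G] (f : G → G → Fˣ) (x y : G) : Fˣ := f x y / f y x

variable {G : Type*} [CommGroup G]

lemma bf_key {f : G → G → Fˣ} (hf : f ∈ twoCocycles (1 : G →* RingAut F)) (g h k : G) :
    f g (h * k) * (f h g * f k g) = (f g h * f g k) * f (h * k) g := by
  rw [mem_twoCocycles_iff] at hf
  have e1 := congrArg Units.val (hf g h k)
  have e2 := congrArg Units.val (hf h k g)
  have e3 := congrArg Units.val (hf h g k)
  rw [mul_comm g k, mul_comm h g] at e3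
  push_cast at e1 e2 e3
  apply mul_left_cancel (a := f h k)
  apply Units.ext
  push_cast
  linear_combination ((f h g : Fˣ) * (f k g : Fˣ) : F) * e1 +
    ((f g h : Fˣ) * (f g k : Fˣ) : F) * e2 +
    (-((f g h : Fˣ) : F) * ((f k g : Fˣ) : F)) * e3

lemma bf_mul_right {f : G → G → Fˣ} (hf : f ∈ twoCocycles (1 : G →* RingAut F)) (g h k : G) :
    bf f g (h * k) = bf f g h * bf f g k := by
  rw [bf, bf, bf, div_mul_div_comm, div_eq_div_iff_mul_eq_mul]
  exact bf_key hf g h k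

lemma bf_inv_symm (f : G → G → Fˣ) (x y : G) : bf f x y = (bf f y x)⁻¹ := by
  rw [bf, bf, inv_div]

lemma bf_self (f : G → G → Fˣ) (x : G) : bf f x x = 1 := div_self' _

lemma bf_mul_left {f : G → G → Fˣ} (hf : f ∈ twoCocycles (1 : G →* RingAut F)) (g h k : G) :
    bf f (g * h) k = bf f g k * bf f h k := by
  rw [bf_inv_symm, bf_mul_right hf, mul_inv, ← bf_inv_symm, ← bf_inv_symm]

/-- `bf f · k` as a monoid hom. -/
def bfHomL {f : G → G → Fˣ} (hf : f ∈ twoCocycles (1 : G →* RingAut F)) (k : G) : G →* Fˣ :=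
  MonoidHom.mk' (fun x => bf f x k) (fun g h => bf_mul_left hf g h k)

/-- `bf f g ·` as a monoid hom. -/
def bfHomR {f : G → G → Fˣ} (hf : f ∈ twoCocycles (1 : G →* RingAut F)) (g : G) : G →* Fˣ :=
  MonoidHom.mk' (fun y => bf f g y) (fun h k => bf_mul_right hf g h k)

lemma bf_mul (f f' : G → G → Fˣ) (x y : G) :
    bf (f * f') x y = bf f x y * bf f' x y := by
  show (f x y * f' x y) / (f y x * f' y x) = _
  rw [bf, bf, div_mul_div_comm]

lemma bf_inv (f : G → G → Fˣ) (x y : G) : bf f⁻¹ x y = (bf f x y)⁻¹ := by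
  show (f x y)⁻¹ / (f y x)⁻¹ = _
  rw [bf, inv_div_inv, inv_div]

lemma bf_coboundary {f : G → G → Fˣ} (hf : f ∈ twoCoboundaries (1 : G →* RingAut F)) (x y : G) :
    bf f x y = 1 := by
  rw [mem_twoCoboundaries_iff] at hf
  obtain ⟨r, hr⟩ := hf
  rw [bf, hr, hr, mul_comm y x, mul_comm (r y) (r x), div_self']

end BF

section Symmetry

open Finset

variable {F : Type*} [Field F] (p : ℕ) [hp : Fact p.Prime] (s : ℕ)

local notation "GG" => (Fin s → Multiplicative (ZMod p))

lemma symm_of_bf_basis {f : GG → GG → Fˣ} (hf : f ∈ twoCocycles (1 : GG →* RingAut F))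
    (hb : ∀ i j : Fin s, i < j → bf f (gbasis p s i) (gbasis p s j) = 1) :
    ∀ x y : GG, f x y = f y x := by
  have hball : ∀ i j : Fin s, bf f (gbasis p s i) (gbasis p s j) = 1 := by
    intro i j
    rcases lt_trichotomy i j with h | h | h
    · exact hb i j h
    · rw [h]; exact bf_self f _
    · rw [bf_inv_symm, hb j i h, inv_one]
  intro x y
  have : bf f x y = 1 := by
    have hx : bf f x y = (bfHomL hf y) x := rfl
    rw [hx, gbasis_expansion p s x, map_prod]
    apply Finset.prod_eq_one
    intro i _
    rw [map_pow]
    have hy : (bfHomL hf y) (gbasis p s i) = (bfHomR hf (gbasis p s i)) y := rfl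
    rw [hy, gbasis_expansion p s y, map_prod]
    rw [Finset.prod_congr rfl (fun j _ => map_pow (bfHomR hf (gbasis p s i)) _ _)]
    have : ∀ j : Fin s, (bfHomR hf (gbasis p s i)) (gbasis p s j) = 1 := fun j => hball i j
    rw [Finset.prod_congr rfl (fun j _ => by rw [this j, one_pow])]
    simp
  rw [bf, div_eq_one] at this
  exact this

end Symmetry
section ExtensionGroup

open Finset

variable (p s : ℕ) [hp : Fact p.Prime] (F : Type*) [Field F]

local notation "GG" => (Fin s → Multiplicative (ZMod p))

/-- A normalized symmetric 2-cocycle. -/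
structure NSC where
  f : (Fin s → Multiplicative (ZMod p)) → (Fin s → Multiplicative (ZMod p)) → Fˣ
  coc : ∀ g h k, f h k * f g (h * k) = f g h * f (g * h) k
  symm : ∀ g h, f g h = f h g
  norm : f 1 1 = 1

variable {p s F}

lemma NSC.norm_left (C : NSC p s F) (x : GG) : C.f 1 x = 1 := by
  have h := C.coc 1 1 x
  simp only [one_mul] at h
  rw [C.norm, one_mul] at h
  exact mul_left_cancel (a := C.f 1 x) (by rw [h, mul_one])

lemma NSC.norm_right (C : NSC p s F) (x : GG) : C.f x 1 = 1 := by
  rw [C.symm, C.norm_left]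

/-- The central extension associated to a normalized symmetric cocycle. -/
@[ext]
structure ExtG (C : NSC p s F) where
  a : Fˣ
  x : (Fin s → Multiplicative (ZMod p))

namespace ExtG

variable {C : NSC p s F}

def emul (u v : ExtG C) : ExtG C := ⟨u.a * v.a * C.f u.x v.x, u.x * v.x⟩
def einv (u : ExtG C) : ExtG C := ⟨(u.a * C.f u.x u.x⁻¹)⁻¹, u.x⁻¹⟩

instance : CommGroup (ExtG C) where
  mul := emul
  one := ⟨1, 1⟩
  inv := einv
  mul_assoc u v w := by
    have e := congrArg Units.val (C.coc u.x v.x w.x)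
    push_cast at e
    refine ExtG.ext ?_ (mul_assoc _ _ _)
    show (emul (emul u v) w).a = (emul u (emul v w)).a
    simp only [emul]
    apply Units.ext
    push_cast
    linear_combination (-((u.a : F) * (v.a : F) * (w.a : F))) * e
  one_mul u := by
    refine ExtG.ext ?_ (one_mul _)
    show (emul ⟨1, 1⟩ u).a = u.a
    simp [emul, C.norm_left]
  mul_one u := by
    refine ExtG.ext ?_ (mul_one _)
    show (emul u ⟨1, 1⟩).a = u.a
    simp [emul, C.norm_right]
  inv_mul_cancel u := by
    refine ExtG.ext ?_ (inv_mul_cancel _)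
    show (emul (einv u) u).a = 1
    simp only [emul, einv]
    rw [show C.f u.x⁻¹ u.x = C.f u.x u.x⁻¹ from C.symm _ _]
    group
  mul_comm u v := by
    refine ExtG.ext ?_ (mul_comm _ _)
    show (emul u v).a = (emul v u).a
    simp only [emul]
    rw [C.symm, mul_comm u.a v.a]

lemma mul_def (u v : ExtG C) : u * v = emul u v := rfl
lemma mul_a (u v : ExtG C) : (u * v).a = u.a * v.a * C.f u.x v.x := rfl
lemma one_def : (1 : ExtG C) = ⟨1, 1⟩ := rfl

/-- The inclusion of `Fˣ`. -/
def iotaE : Fˣ →* ExtG C where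
  toFun a := ⟨a, 1⟩
  map_one' := rfl
  map_mul' a b := by
    refine ExtG.ext ?_ (one_mul _).symm
    show a * b = (emul ⟨a, 1⟩ ⟨b, 1⟩).a
    simp [emul, C.norm]

/-- The projection to `GG`. -/
def piE : ExtG C →* (Fin s → Multiplicative (ZMod p)) where
  toFun u := u.x
  map_one' := rfl
  map_mul' u v := rfl

def uE (x : GG) : ExtG C := ⟨1, x⟩

end ExtG

/-- The product `∏_{j=1}^{p-1} f(x^j, x)`. -/
def Mff (p : ℕ) {s : ℕ} {F : Type*} [Field F]
    (f : (Fin s → Multiplicative (ZMod p)) → (Fin s → Multiplicative (ZMod p)) → Fˣ)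
    (x : Fin s → Multiplicative (ZMod p)) : Fˣ :=
  ∏ j ∈ Finset.Ico 1 p, f (x ^ j) x

lemma ExtG.uE_pow (C : NSC p s F) (x : GG) (k : ℕ) :
    (uE x : ExtG C) ^ k = ⟨∏ j ∈ Finset.Ico 1 k, C.f (x ^ j) x, x ^ k⟩ := by
  induction k with
  | zero => simp [one_def]
  | succ k ih =>
    rcases Nat.eq_zero_or_pos k with hk | hk
    · subst hk
      refine ExtG.ext ?_ ?_ <;> simp [uE]
    · rw [pow_succ, ih, mul_def]
      refine ExtG.ext ?_ ?_
      · show _ * 1 * C.f (x ^ k) x = _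
        rw [mul_one, Finset.prod_Ico_succ_top hk]
      · show x ^ k * x = x ^ (k + 1)
        rw [pow_succ]

lemma ExtG.uE_pow_p (C : NSC p s F) (x : GG) :
    (uE x : ExtG C) ^ p = iotaE (Mff p C.f x) := by
  rw [uE_pow, Mff]
  refine ExtG.ext rfl ?_
  show x ^ p = 1
  exact pow_p_eq_one p s x

lemma Mff_mul (f f' : GG → GG → Fˣ) (x : GG) :
    Mff p (f * f') x = Mff p f x * Mff p f' x := by
  rw [Mff, Mff, Mff, ← Finset.prod_mul_distrib]
  rfl

lemma Mff_inv (f : GG → GG → Fˣ) (x : GG) : Mff p f⁻¹ x = (Mff p f x)⁻¹ := by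
  rw [Mff, Mff, ← Finset.prod_inv_distrib]
  rfl

lemma Mff_coboundary (r : GG → Fˣ) (x : GG) :
    Mff p (fun g h => r g * r h * (r (g * h))⁻¹) x = (r x) ^ p * (r 1)⁻¹ := by
  have h1 : ∀ j : ℕ, r (x ^ j) * r x * (r (x ^ j * x))⁻¹ = r x * (r (x ^ j) / r (x ^ (j + 1))) := by
    intro j
    have hj : x ^ j * x = x ^ (j + 1) := (pow_succ x j).symm
    rw [hj, div_eq_mul_inv, ← mul_assoc, mul_comm (r x) (r (x ^ j))]
  rw [Mff, Finset.prod_congr rfl (fun j _ => h1 j), Finset.prod_mul_distrib,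
    Finset.prod_const, Nat.card_Ico]
  have h2 : ∏ j ∈ Finset.Ico 1 p, (r (x ^ j) / r (x ^ (j + 1))) = r x / r (x ^ p) := by
    have key := Finset.prod_range_div' (fun i => r (x ^ (i + 1))) (p - 1)
    rw [Finset.prod_Ico_eq_prod_range]
    calc ∏ k ∈ Finset.range (p - 1), (r (x ^ (1 + k)) / r (x ^ (1 + k + 1)))
        = ∏ i ∈ Finset.range (p - 1), (r (x ^ (i + 1)) / r (x ^ (i + 1 + 1))) := by
          apply Finset.prod_congr rfl
          intro i _
          rw [Nat.add_comm 1 i]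
      _ = r (x ^ (0 + 1)) / r (x ^ (p - 1 + 1)) := key
      _ = r x / r (x ^ p) := by
          rw [show (0:ℕ) + 1 = 1 from rfl, pow_one,
            show p - 1 + 1 = p from by have := hp.out.one_lt; omega]
  rw [h2, pow_p_eq_one]
  have hpow : (r x) ^ (p - 1) * r x = (r x) ^ p := by
    rw [← pow_succ, show p - 1 + 1 = p from by have := hp.out.one_lt; omega]
  rw [div_eq_mul_inv, ← mul_assoc, hpow]

/-- The splitting lemma: a normalized symmetric cocycle whose `M`-invariants at the basis
vectors are `p`-th powers is a coboundary. -/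
lemma NSC.isTwoCoboundary (C : NSC p s F)
    (hM : ∀ i : Fin s, ∃ d : Fˣ, Mff p C.f (gbasis p s i) = d ^ p) :
    IsTwoCoboundary (1 : GG →* RingAut F) C.f := by
  classical
  choose d hd using hM
  set v : Fin s → ExtG C := fun i => ExtG.uE (gbasis p s i) * (ExtG.iotaE (d i))⁻¹ with hv_def
  have hv : ∀ i, (v i) ^ p = 1 := by
    intro i
    rw [hv_def]
    simp only
    rw [mul_pow, ExtG.uE_pow_p, inv_pow, ← map_pow, ← hd i, mul_inv_cancel]
  set S : GG → ExtG C := fun x => ∏ i, (v i) ^ (mval p (x i)) with hS_def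
  have hS : ∀ x y : GG, S x * S y = S (x * y) := by
    intro x y
    rw [hS_def]
    simp only
    rw [← Finset.prod_mul_distrib]
    apply Finset.prod_congr rfl
    intro i _
    rw [← pow_add, mval_carry p (x i) (y i), pow_add, pow_mul, hv, one_pow, mul_one]
    rfl
  have hSx : ∀ x : GG, (S x).x = x := by
    intro x
    have : (S x).x = ExtG.piE (S x) := rfl
    rw [this, hS_def]
    simp only
    rw [map_prod]
    have : ∀ i, ExtG.piE ((v i) ^ (mval p (x i))) = (gbasis p s i) ^ (mval p (x i)) := by
      intro i
      rw [map_pow]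
      congr 1
      show (v i).x = gbasis p s i
      have hpi : (v i).x = ExtG.piE (v i) := rfl
      rw [hpi, hv_def]
      simp only
      rw [map_mul, map_inv]
      show gbasis p s i * ((1 : Fin s → Multiplicative (ZMod p)))⁻¹ = gbasis p s i
      simp
    rw [Finset.prod_congr rfl (fun i _ => this i)]
    exact (gbasis_expansion p s x).symm
  rw [isTwoCoboundary_one_iff]
  refine ⟨fun x => ((S x).a)⁻¹, fun g h => ?_⟩
  have := congrArg ExtG.a (hS g h)
  rw [ExtG.mul_a, hSx, hSx] at this
  show C.f g h = (S g).a⁻¹ * (S h).a⁻¹ * ((S (g * h)).a⁻¹)⁻¹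
  rw [inv_inv, ← this]
  apply Units.ext
  push_cast
  field_simp

end ExtensionGroup
section PhiCocycles

open Finset

variable (p s : ℕ) [hp : Fact p.Prime] {F : Type*} [Field F]

local notation "GG" => (Fin s → Multiplicative (ZMod p))

lemma pow_eq_pow_of_mod {z : Fˣ} (hz : z ^ p = 1) {a b : ℕ} (h : a % p = b % p) :
    z ^ a = z ^ b := by
  conv_lhs => rw [← Nat.div_add_mod a p]
  conv_rhs => rw [← Nat.div_add_mod b p]
  rw [pow_add, pow_add, pow_mul, pow_mul, hz, one_pow, h]
  simp

lemma cast_mod_eq_iff (a b : ℕ) : (a : ZMod p) = (b : ZMod p) ↔ a % p = b % p :=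
  ZMod.natCast_eq_natCast_iff' a b p

lemma mval_mul_cast (u v : Multiplicative (ZMod p)) :
    ((mval p (u * v) : ℕ) : ZMod p) = (mval p u : ZMod p) + (mval p v : ZMod p) := by
  rw [mval_mul, ZMod.natCast_mod, Nat.cast_add]

/-- diagonal standard cocycle. -/
def cdiag (g : Fˣ) (m : ℕ) (i : Fin s) : GG → GG → Fˣ :=
  fun x y => g ^ (m * mcarry p (x i) (y i))

/-- off-diagonal standard cocycle. -/
def coff (z : Fˣ) (m : ℕ) (i j : Fin s) : GG → GG → Fˣ :=
  fun x y => z ^ (m * (mval p (x i) * mval p (y j)))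

lemma mcarry_cocycle (u v w : Multiplicative (ZMod p)) :
    mcarry p v w + mcarry p u (v * w) = mcarry p u v + mcarry p (u * v) w := by
  have h1 := mval_carry p v w
  have h2 := mval_carry p u (v * w)
  have h3 := mval_carry p u v
  have h4 := mval_carry p (u * v) w
  have hassoc : mval p (u * (v * w)) = mval p ((u * v) * w) := by rw [mul_assoc]
  have hp0 : 0 < p := hp.out.pos
  have e1 : mval p (u * (v * w)) + p * (mcarry p v w + mcarry p u (v * w)) =
      mval p u + (mval p v + mval p w) := by
    rw [Nat.left_distrib]
    linarith
  have e2 : mval p ((u * v) * w) + p * (mcarry p u v + mcarry p (u * v) w) =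
      (mval p u + mval p v) + mval p w := by
    rw [Nat.left_distrib]
    linarith
  have : p * (mcarry p v w + mcarry p u (v * w)) = p * (mcarry p u v + mcarry p (u * v) w) := by
    linarith
  exact Nat.eq_of_mul_eq_mul_left hp0 this

lemma cdiag_mem (g : Fˣ) (m : ℕ) (i : Fin s) :
    cdiag p s g m i ∈ twoCocycles (1 : GG →* RingAut F) := by
  rw [mem_twoCocycles_iff]
  intro a b c
  show g ^ _ * g ^ _ = g ^ _ * g ^ _
  rw [← pow_add, ← pow_add, ← Nat.left_distrib, ← Nat.left_distrib]
  congr 2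
  exact mcarry_cocycle p (a i) (b i) (c i)

lemma coff_mem {z : Fˣ} (hz : z ^ p = 1) (m : ℕ) (i j : Fin s) :
    coff p s z m i j ∈ twoCocycles (1 : GG →* RingAut F) := by
  rw [mem_twoCocycles_iff]
  intro a b c
  show z ^ _ * z ^ _ = z ^ _ * z ^ _
  rw [← pow_add, ← pow_add]
  apply pow_eq_pow_of_mod p hz
  rw [← cast_mod_eq_iff]
  simp only [Pi.mul_apply]
  push_cast [mval_mul_cast]
  ring

/-- the standard cocycle attached to a matrix of parameters. -/
def Phi (g z : Fˣ) (a : Fin s → Fin s → ZMod p) : GG → GG → Fˣ :=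
  (∏ i : Fin s, cdiag p s g ((a i i).val) i) *
    ∏ q : Fin s × Fin s, if q.1 < q.2 then coff p s z ((a q.1 q.2).val) q.1 q.2 else 1

lemma Phi_mem (g : Fˣ) {z : Fˣ} (hz : z ^ p = 1) (a : Fin s → Fin s → ZMod p) :
    Phi p s g z a ∈ twoCocycles (1 : GG →* RingAut F) := by
  apply Subgroup.mul_mem
  · exact Subgroup.prod_mem _ (fun i _ => cdiag_mem p s g _ i)
  · refine Subgroup.prod_mem _ (fun q _ => ?_)
    split
    · exact coff_mem p s hz _ _ _
    · exact Subgroup.one_mem _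

lemma Phi_apply (g z : Fˣ) (a : Fin s → Fin s → ZMod p) (x y : GG) :
    Phi p s g z a x y =
      (∏ i : Fin s, g ^ ((a i i).val * mcarry p (x i) (y i))) *
      ∏ q : Fin s × Fin s, (if q.1 < q.2 then
        z ^ ((a q.1 q.2).val * (mval p (x q.1) * mval p (y q.2))) else 1) := by
  unfold Phi
  rw [Pi.mul_apply, Pi.mul_apply]
  congr 1
  · rw [Finset.prod_apply, Finset.prod_apply]
    rfl
  · rw [Finset.prod_apply, Finset.prod_apply]
    apply Finset.prod_congr rfl
    intro q _
    rw [apply_ite (fun (f : GG → GG → Fˣ) => f x y)]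
    rfl

lemma mcarry_eq_zero_of_lt {u v : Multiplicative (ZMod p)} (h : mval p u + mval p v < p) :
    mcarry p u v = 0 := Nat.div_eq_of_lt h

lemma Phi_diag_one (g z : Fˣ) (a : Fin s → Fin s → ZMod p) {i j : Fin s} (hij : i ≠ j) :
    ∏ i' : Fin s, g ^ ((a i' i').val * mcarry p (gbasis p s i i') (gbasis p s j i')) = 1 := by
  apply Finset.prod_eq_one
  intro i' _
  have hc : mcarry p (gbasis p s i i') (gbasis p s j i') = 0 := by
    apply mcarry_eq_zero_of_lt
    rw [show mval p (gbasis p s i i') = mval p (gbasis p s i i') from rfl]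
    have h1 := mval_gbasis p s i i'
    have h2 := mval_gbasis p s j i'
    have hplt := hp.out.one_lt
    rw [h1, h2]
    split_ifs with e1 e2 e2
    · exact absurd (e1.symm.trans e2) hij
    · omega
    · omega
    · omega
  rw [hc, Nat.mul_zero, pow_zero]

lemma Phi_basis_lt (g z : Fˣ) (a : Fin s → Fin s → ZMod p) {i j : Fin s} (hij : i < j) :
    Phi p s g z a (gbasis p s i) (gbasis p s j) = z ^ ((a i j).val) := by
  rw [Phi_apply, Phi_diag_one p s g z a hij.ne, one_mul]
  rw [Finset.prod_eq_single (i, j)]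
  · rw [if_pos hij, mval_gbasis, mval_gbasis, if_pos rfl, if_pos rfl, mul_one, mul_one]
  · intro q _ hq
    split_ifs with hlt
    · rw [mval_gbasis, mval_gbasis]
      have : ¬ (q.1 = i ∧ q.2 = j) := by
        intro ⟨h1, h2⟩
        exact hq (Prod.ext h1 h2)
      split_ifs with e1 e2 e2
      · exact absurd ⟨e1, e2⟩ this
      all_goals simp
    · rfl
  · intro h
    exact absurd (Finset.mem_univ _) h

lemma Phi_basis_gt (g z : Fˣ) (a : Fin s → Fin s → ZMod p) {i j : Fin s} (hij : i < j) :
    Phi p s g z a (gbasis p s j) (gbasis p s i) = 1 := by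
  rw [Phi_apply, Phi_diag_one p s g z a hij.ne']
  rw [one_mul]
  apply Finset.prod_eq_one
  intro q _
  split_ifs with hlt
  · rw [mval_gbasis, mval_gbasis]
    have : ¬ (q.1 = j ∧ q.2 = i) := by
      intro ⟨h1, h2⟩
      rw [h1, h2] at hlt
      exact absurd hlt (not_lt.mpr hij.le)
    split_ifs with e1 e2 e2
    · exact absurd ⟨e1, e2⟩ this
    all_goals simp
  · rfl

lemma Phi_one_one (g z : Fˣ) (a : Fin s → Fin s → ZMod p) :
    Phi p s g z a 1 1 = 1 := by
  rw [Phi_apply]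
  have h1 : ∀ i : Fin s, mval p ((1 : GG) i) = 0 := fun i => mval_one p
  have h2 : ∀ i : Fin s, mcarry p ((1 : GG) i) ((1 : GG) i) = 0 := by
    intro i
    apply mcarry_eq_zero_of_lt
    rw [h1 i]
    have := hp.out.pos
    omega
  rw [Finset.prod_eq_one (fun i (_ : i ∈ Finset.univ) => by
    rw [h2 i, Nat.mul_zero, pow_zero]), one_mul]
  apply Finset.prod_eq_one
  intro q _
  split_ifs with hlt
  · rw [h1 q.1, Nat.zero_mul, Nat.mul_zero, pow_zero]
  · rfl

lemma Phi_Mff (g z : Fˣ) (a : Fin s → Fin s → ZMod p) (i : Fin s) :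
    Mff p (Phi p s g z a) (gbasis p s i) = g ^ ((a i i).val) := by
  have hplt := hp.out.one_lt
  have key : ∀ jj ∈ Finset.Ico 1 p,
      Phi p s g z a ((gbasis p s i) ^ jj) (gbasis p s i) =
        g ^ ((a i i).val * (if jj = p - 1 then 1 else 0)) := by
    intro jj hjj
    rw [Finset.mem_Ico] at hjj
    rw [Phi_apply]
    have hoff : ∀ q : Fin s × Fin s, (if q.1 < q.2 then
        z ^ ((a q.1 q.2).val * (mval p (((gbasis p s i) ^ jj) q.1) * mval p (gbasis p s i q.2)))
        else 1) = 1 := by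
      intro q
      split_ifs with hlt
      · rw [mval_gbasis_pow, mval_gbasis]
        by_cases h1 : q.1 = i
        · have h2 : ¬ (q.2 = i) := fun h2 => absurd hlt (by rw [h1, h2]; exact lt_irrefl i)
          rw [if_neg h2, Nat.mul_zero, Nat.mul_zero, pow_zero]
        · rw [if_neg h1, Nat.zero_mul, Nat.mul_zero, pow_zero]
      · rfl
    rw [Finset.prod_congr rfl (fun q _ => hoff q), Finset.prod_const_one, mul_one]
    rw [Finset.prod_eq_single i]
    · congr 2
      show mcarry p (((gbasis p s i) ^ jj) i) (gbasis p s i i) = _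
      rw [mcarry, mval_gbasis_pow, mval_gbasis, if_pos rfl, if_pos rfl,
        Nat.mod_eq_of_lt hjj.2]
      rcases eq_or_ne jj (p - 1) with h | h
      · rw [if_pos h, h, show p - 1 + 1 = p from by omega, Nat.div_self hp.out.pos]
      · rw [if_neg h, Nat.div_eq_of_lt (by omega)]
    · intro i' _ hi'
      have : mcarry p (((gbasis p s i) ^ jj) i') (gbasis p s i i') = 0 := by
        apply mcarry_eq_zero_of_lt
        rw [mval_gbasis_pow, mval_gbasis, if_neg hi', if_neg hi']
        omega
      rw [this, Nat.mul_zero, pow_zero]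
    · intro h
      exact absurd (Finset.mem_univ _) h
  rw [Mff, Finset.prod_congr rfl key]
  rw [Finset.prod_eq_single (p - 1)]
  · rw [if_pos rfl, Nat.mul_one]
  · intro jj _ hjj
    rw [if_neg hjj, Nat.mul_zero, pow_zero]
  · intro h
    exact absurd (Finset.mem_Ico.mpr ⟨by omega, by omega⟩) h

end PhiCocycles
section Invariants

open Finset

variable (p s : ℕ) [hp : Fact p.Prime] {F : Type*} [Field F]

local notation "GG" => (Fin s → Multiplicative (ZMod p))

/-- the subgroup of `p`-th roots of unity. -/
def Up : Subgroup Fˣ where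
  carrier := {x | x ^ p = 1}
  one_mem' := one_pow p
  mul_mem' := by
    intro a b ha hb
    show (a * b) ^ p = 1
    rw [mul_pow, ha, hb, one_mul]
  inv_mem' := by
    intro a ha
    show (a⁻¹) ^ p = 1
    rw [inv_pow, ha, inv_one]

variable (F) in
/-- the target group of the invariant map. -/
abbrev TT := ({q : Fin s × Fin s // q.1 < q.2} → Up p (F := F)) × (Fin s → Up p (F := F))

/-- evaluation of a 2-cochain at a point, as a monoid hom. -/
def evalHom (x y : GG) : (GG → GG → Fˣ) →* Fˣ :=
  (Pi.evalMonoidHom (fun _ : GG => Fˣ) y).comp (Pi.evalMonoidHom (fun _ : GG => GG → Fˣ) x)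

lemma evalHom_apply (x y : GG) (f : GG → GG → Fˣ) : evalHom p s x y f = f x y := rfl

/-- `Mff` as a monoid hom. -/
def MffHom (x : GG) : (GG → GG → Fˣ) →* Fˣ :=
  ∏ j ∈ Finset.Ico 1 p, evalHom p s (x ^ j) x

lemma MffHom_apply (x : GG) (f : GG → GG → Fˣ) : MffHom p s x f = Mff p f x :=
  MonoidHom.finset_prod_apply _ _ _

/-- the alternating-form component of the invariant, as a hom. -/
def bfHom (x y : GG) : (GG → GG → Fˣ) →* Fˣ := evalHom p s x y / evalHom p s y x

lemma bfHom_apply (x y : GG) (f : GG → GG → Fˣ) : bfHom p s x y f = bf f x y := rfl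

/-- the `Ext` component of the invariant, as a hom. -/
def chiHom (n : ℕ) (i : Fin s) : (GG → GG → Fˣ) →* Fˣ :=
  (MffHom p s (gbasis p s i) / (evalHom p s 1 1) ^ (p - 1)) ^ n

lemma chiHom_apply (n : ℕ) (i : Fin s) (f : GG → GG → Fˣ) :
    chiHom p s n i f = (Mff p f (gbasis p s i) / (f 1 1) ^ (p - 1)) ^ n := by
  have h : chiHom p s n i f = (MffHom p s (gbasis p s i) f / (f 1 1) ^ (p - 1)) ^ n := rfl
  rw [h, MffHom_apply]

lemma bf_pow_p_eq_one {f : GG → GG → Fˣ} (hf : f ∈ twoCocycles (1 : GG →* RingAut F))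
    (x y : GG) : (bf f x y) ^ p = 1 := by
  have h1 : bf f x y = (bfHomL hf y) x := rfl
  rw [h1, ← map_pow, pow_p_eq_one, map_one]

/-- The full invariant map on 2-cocycles. -/
def Psi (n : ℕ) (hn : ∀ x : Fˣ, x ^ (n * p) = 1) :
    (twoCocycles (1 : GG →* RingAut F)) →* TT p s F := by
  refine MonoidHom.mk' (fun f =>
    (fun q => ⟨bfHom p s (gbasis p s q.1.1) (gbasis p s q.1.2) f.1, ?_⟩,
     fun i => ⟨chiHom p s n i f.1, ?_⟩)) ?_
  · show (bfHom p s _ _ f.1) ^ p = 1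
    rw [bfHom_apply]
    exact bf_pow_p_eq_one p s f.2 _ _
  · show (chiHom p s n i f.1) ^ p = 1
    rw [chiHom, MonoidHom.pow_apply, ← pow_mul]
    exact hn _
  · intro f f'
    have h1 : ((f * f' : twoCocycles (1 : GG →* RingAut F)) : GG → GG → Fˣ) = f.1 * f'.1 := rfl
    refine Prod.ext ?_ ?_
    · funext q
      apply Subtype.ext
      show bfHom p s _ _ (f * f' : twoCocycles (1 : GG →* RingAut F)).1 = _
      rw [h1, map_mul]
      rfl
    · funext i
      apply Subtype.ext
      show chiHom p s n i (f * f' : twoCocycles (1 : GG →* RingAut F)).1 = _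
      rw [h1, map_mul]
      rfl

lemma Psi_coboundary (n : ℕ) (hn : ∀ x : Fˣ, x ^ (n * p) = 1)
    (f : twoCocycles (1 : GG →* RingAut F)) (hf : f.1 ∈ twoCoboundaries (1 : GG →* RingAut F)) :
    Psi p s n hn f = 1 := by
  rw [mem_twoCoboundaries_iff] at hf
  obtain ⟨r, hr⟩ := hf
  have hfeq : f.1 = fun g h => r g * r h * (r (g * h))⁻¹ := by
    funext g h
    exact hr g h
  refine Prod.ext ?_ ?_
  · funext q
    apply Subtype.ext
    show bfHom p s _ _ f.1 = 1
    rw [bfHom_apply]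
    apply bf_coboundary
    rw [mem_twoCoboundaries_iff]
    exact ⟨r, hr⟩
  · funext i
    apply Subtype.ext
    show chiHom p s n i f.1 = 1
    rw [chiHom_apply]
    have h11 : f.1 1 1 = r 1 := by
      rw [hr 1 1, one_mul]
      group
    have hM : Mff p f.1 (gbasis p s i) = (r (gbasis p s i)) ^ p * (r 1)⁻¹ := by
      rw [hfeq]
      exact Mff_coboundary r _
    rw [hM, h11]
    have key : (r (gbasis p s i)) ^ p * (r 1)⁻¹ / (r 1) ^ (p - 1) =
        (r (gbasis p s i) / r 1) ^ p := by
      rw [div_pow, div_eq_div_iff_mul_eq_mul]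
      have hpp : (p - 1) + 1 = p := by have := hp.out.one_lt; omega
      rw [mul_assoc]
      congr 1
      have hstep : r 1 ^ p = r 1 ^ ((p - 1) + 1) := by rw [hpp]
      rw [hstep, pow_succ', inv_mul_cancel_left]
    rw [key, ← pow_mul, mul_comm p n, hn]

variable {p s}

/-- first main step: a cocycle with trivial invariants is a coboundary. -/
lemma coboundary_of_invariants_trivial (n : ℕ) (hn0 : 0 < n)
    (g : Fˣ) (hgen : ∀ x : Fˣ, ∃ m : ℕ, g ^ m = x) (horder : orderOf g = n * p)
    {f : GG → GG → Fˣ} (hf : f ∈ twoCocycles (1 : GG →* RingAut F))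
    (h1 : ∀ i j : Fin s, i < j → bf f (gbasis p s i) (gbasis p s j) = 1)
    (h2 : ∀ i : Fin s, (Mff p f (gbasis p s i) / (f 1 1) ^ (p - 1)) ^ n = 1) :
    f ∈ twoCoboundaries (1 : GG →* RingAut F) := by
  have hsymm : ∀ x y : GG, f x y = f y x := symm_of_bf_basis p s hf h1
  set c : Fˣ := f 1 1 with hc
  have hconst_cob : (fun (_ _ : GG) => c) ∈ twoCoboundaries (1 : GG →* RingAut F) := by
    rw [mem_twoCoboundaries_iff]
    exact ⟨fun _ => c, fun g h => by group⟩
  set f2 : GG → GG → Fˣ := f * (fun (_ _ : GG) => c)⁻¹ with hf2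
  have hf2coc : f2 ∈ twoCocycles (1 : GG →* RingAut F) := by
    apply Subgroup.mul_mem _ hf
    apply Subgroup.inv_mem
    rw [mem_twoCocycles_iff]
    intro a b d
    rw [mul_comm]
  have hf2symm : ∀ x y : GG, f2 x y = f2 y x := by
    intro x y
    show f x y * c⁻¹ = f y x * c⁻¹
    rw [hsymm]
  have hf2norm : f2 1 1 = 1 := by
    show f 1 1 * c⁻¹ = 1
    rw [← hc, mul_inv_cancel]
  have hMff2 : ∀ i : Fin s, Mff p f2 (gbasis p s i) = Mff p f (gbasis p s i) / c ^ (p - 1) := by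
    intro i
    rw [hf2, Mff_mul, Mff_inv]
    congr 1
    show (∏ _j ∈ Finset.Ico 1 p, c)⁻¹ = (c ^ (p - 1))⁻¹
    rw [Finset.prod_const, Nat.card_Ico]
  have hppows : ∀ i : Fin s, ∃ d : Fˣ, Mff p f2 (gbasis p s i) = d ^ p := by
    intro i
    have hx : (Mff p f2 (gbasis p s i)) ^ n = 1 := by
      rw [hMff2 i]
      exact h2 i
    obtain ⟨m, hm⟩ := hgen (Mff p f2 (gbasis p s i))
    have hdvd : orderOf g ∣ m * n := by
      apply orderOf_dvd_of_pow_eq_one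
      rw [pow_mul, hm, hx]
    rw [horder] at hdvd
    obtain ⟨k, hk⟩ := hdvd
    have hm_eq : m = p * k := by
      have h' : n * m = n * (p * k) := by
        rw [Nat.mul_comm n m, hk]
        ring
      exact Nat.eq_of_mul_eq_mul_left hn0 h'
    refine ⟨g ^ k, ?_⟩
    rw [← hm, hm_eq, Nat.mul_comm p k, pow_mul]
  have hf2cob : f2 ∈ twoCoboundaries (1 : GG →* RingAut F) :=
    NSC.isTwoCoboundary ⟨f2, mem_twoCocycles_iff.mp hf2coc, hf2symm, hf2norm⟩ hppows
  have hfeq : f = f2 * (fun (_ _ : GG) => c) := by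
    funext x y
    show f x y = f x y * c⁻¹ * c
    group
  rw [hfeq]
  exact Subgroup.mul_mem _ hf2cob hconst_cob

/-- second main step: every invariant tuple is attained by a standard cocycle. -/
lemma invariants_surjective (n : ℕ)
    (g : Fˣ) (hgen : ∀ x : Fˣ, ∃ m : ℕ, g ^ m = x) (horder : orderOf g = n * p)
    (hn : ∀ x : Fˣ, x ^ (n * p) = 1) (t : TT p s F) :
    ∃ f : twoCocycles (1 : GG →* RingAut F), Psi p s n hn f = t := by
  classical
  have hζp : (g ^ n) ^ p = 1 := by rw [← pow_mul, ← horder, pow_orderOf_eq_one]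
  have hUp_pow : ∀ u : Fˣ, u ^ p = 1 → ∃ k : ℕ, (g ^ n) ^ k = u := by
    intro u hu
    obtain ⟨m, hm⟩ := hgen u
    have hdvd : orderOf g ∣ m * p := orderOf_dvd_of_pow_eq_one (by rw [pow_mul, hm, hu])
    rw [horder] at hdvd
    obtain ⟨k, hk⟩ := hdvd
    have hmk : m = n * k := by
      have hp0 : 0 < p := hp.out.pos
      have h' : m * p = (n * k) * p := by rw [hk]; ring
      exact Nat.eq_of_mul_eq_mul_right hp0 h'
    exact ⟨k, by rw [← pow_mul, ← hmk, hm]⟩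
  choose k1 hk1 using fun q : {q : Fin s × Fin s // q.1 < q.2} => hUp_pow (t.1 q).1 (t.1 q).2
  choose k2 hk2 using fun i : Fin s => hUp_pow (t.2 i).1 (t.2 i).2
  set A : Fin s → Fin s → ZMod p := fun i j =>
    if h : i < j then ((k1 ⟨(i, j), h⟩ : ℕ) : ZMod p)
    else if i = j then ((k2 i : ℕ) : ZMod p) else 0 with hA
  refine ⟨⟨Phi p s g (g ^ n) A, Phi_mem p s g hζp A⟩, ?_⟩
  refine Prod.ext ?_ ?_
  · funext q
    apply Subtype.ext
    show bfHom p s (gbasis p s q.1.1) (gbasis p s q.1.2) (Phi p s g (g ^ n) A) = (t.1 q : Fˣ)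
    rw [bfHom_apply]
    have hbf : bf (Phi p s g (g ^ n) A) (gbasis p s q.1.1) (gbasis p s q.1.2)
        = Phi p s g (g ^ n) A (gbasis p s q.1.1) (gbasis p s q.1.2) /
          Phi p s g (g ^ n) A (gbasis p s q.1.2) (gbasis p s q.1.1) := rfl
    rw [hbf, Phi_basis_lt p s g (g ^ n) A q.2, Phi_basis_gt p s g (g ^ n) A q.2, div_one]
    have haq : A q.1.1 q.1.2 = ((k1 q : ℕ) : ZMod p) := by
      simp only [hA]
      exact dif_pos q.2
    rw [haq, ZMod.val_natCast,
      pow_eq_pow_of_mod p hζp (Nat.mod_mod_of_dvd _ dvd_rfl), hk1 q]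
  · funext i
    apply Subtype.ext
    show chiHom p s n i (Phi p s g (g ^ n) A) = (t.2 i : Fˣ)
    rw [chiHom_apply, Phi_Mff, Phi_one_one, one_pow, div_one]
    have hai : A i i = ((k2 i : ℕ) : ZMod p) := by
      simp only [hA]
      rw [dif_neg (lt_irrefl i)]
      simp
    rw [hai, ZMod.val_natCast, ← pow_mul, Nat.mul_comm ((k2 i : ℕ) % p) n, pow_mul,
      pow_eq_pow_of_mod p hζp (Nat.mod_mod_of_dvd _ dvd_rfl), hk2 i]

end Invariants
section FinalAssembly

open Finset

variable (p s : ℕ) [hp : Fact p.Prime] {F : Type*} [Field F]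

local notation "GG" => (Fin s → Multiplicative (ZMod p))

/-- The invariant map on `H²`. -/
def PsiBar (n : ℕ) (hn : ∀ x : Fˣ, x ^ (n * p) = 1) :
    H2 (1 : GG →* RingAut F) →* TT p s F :=
  QuotientGroup.lift _ (Psi p s n hn) (by
    intro x hx
    exact Psi_coboundary p s n hn x (Subgroup.mem_subgroupOf.mp hx))

lemma PsiBar_bijective (n : ℕ) (hn0 : 0 < n) (g : Fˣ)
    (hgen : ∀ x : Fˣ, ∃ m : ℕ, g ^ m = x) (horder : orderOf g = n * p)
    (hn : ∀ x : Fˣ, x ^ (n * p) = 1) :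
    Function.Bijective (PsiBar p s n hn) := by
  constructor
  · apply (injective_iff_map_eq_one _).mpr
    intro x hx
    obtain ⟨f, rfl⟩ := QuotientGroup.mk_surjective x
    have hPsi : Psi p s n hn f = 1 := hx
    have h1 : ∀ i j : Fin s, i < j → bf f.1 (gbasis p s i) (gbasis p s j) = 1 := by
      intro i j hij
      have h : bfHom p s (gbasis p s i) (gbasis p s j) f.1 = 1 :=
        congrArg (fun t : TT p s F => ((t.1 ⟨(i, j), hij⟩ : Fˣ))) hPsi
      rw [bfHom_apply] at h
      exact h
    have h2 : ∀ i : Fin s, (Mff p f.1 (gbasis p s i) / (f.1 1 1) ^ (p - 1)) ^ n = 1 := by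
      intro i
      have h : chiHom p s n i f.1 = 1 :=
        congrArg (fun t : TT p s F => ((t.2 i : Fˣ))) hPsi
      rw [chiHom_apply] at h
      exact h
    have hmem := coboundary_of_invariants_trivial n hn0 g hgen horder f.2 h1 h2
    rw [QuotientGroup.eq_one_iff]
    exact Subgroup.mem_subgroupOf.mpr hmem
  · intro t
    obtain ⟨f, hf⟩ := invariants_surjective n g hgen horder hn t
    exact ⟨QuotientGroup.mk f, hf⟩

lemma Up_pow_exists (n : ℕ) (g : Fˣ)
    (hgen : ∀ x : Fˣ, ∃ m : ℕ, g ^ m = x) (horder : orderOf g = n * p)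
    (u : Fˣ) (hu : u ^ p = 1) : ∃ k : ℕ, (g ^ n) ^ k = u := by
  obtain ⟨m, hm⟩ := hgen u
  have hdvd : orderOf g ∣ m * p := orderOf_dvd_of_pow_eq_one (by rw [pow_mul, hm, hu])
  rw [horder] at hdvd
  obtain ⟨k, hk⟩ := hdvd
  have hmk : m = n * k := by
    have hp0 : 0 < p := hp.out.pos
    have h' : m * p = (n * k) * p := by rw [hk]; ring
    exact Nat.eq_of_mul_eq_mul_right hp0 h'
  exact ⟨k, by rw [← pow_mul, ← hmk, hm]⟩

/-- `μ_p ≅ C_p`. -/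
noncomputable def upEquiv (n : ℕ) (hn0 : 0 < n) (g : Fˣ)
    (hgen : ∀ x : Fˣ, ∃ m : ℕ, g ^ m = x) (horder : orderOf g = n * p) :
    Multiplicative (ZMod p) ≃* (Up p (F := F)) := by
  have hζp : (g ^ n) ^ p = 1 := by rw [← pow_mul, ← horder, pow_orderOf_eq_one]
  have hordζ : orderOf (g ^ n) = p := by
    have hd : orderOf (g ^ n) ∣ p := orderOf_dvd_of_pow_eq_one hζp
    rcases (Nat.Prime.eq_one_or_self_of_dvd hp.out _ hd) with h | h
    · exfalso
      rw [orderOf_eq_one_iff] at h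
      have : orderOf g ∣ n := orderOf_dvd_of_pow_eq_one h
      rw [horder] at this
      have h1 := Nat.le_of_dvd hn0 this
      have h2 := hp.out.two_le
      nlinarith
    · exact h
  have hmem : ∀ c : Multiplicative (ZMod p), (g ^ n) ^ (mval p c) ∈ Up p (F := F) := by
    intro c
    show ((g ^ n) ^ (mval p c)) ^ p = 1
    rw [← pow_mul, Nat.mul_comm, pow_mul, hζp, one_pow]
  refine MulEquiv.ofBijective (MonoidHom.mk' (fun c => ⟨(g ^ n) ^ (mval p c), hmem c⟩)
    ?_) ⟨?_, ?_⟩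
  · intro c d
    apply Subtype.ext
    show (g ^ n) ^ (mval p (c * d)) = (g ^ n) ^ (mval p c) * (g ^ n) ^ (mval p d)
    rw [← pow_add]
    apply pow_eq_pow_of_mod p hζp
    rw [mval_mul]
    exact Nat.mod_mod_of_dvd _ dvd_rfl
  · apply (injective_iff_map_eq_one _).mpr
    intro c hc
    have h : (g ^ n) ^ (mval p c) = 1 := congrArg Subtype.val hc
    have hdvd : p ∣ mval p c := by
      have hd := orderOf_dvd_of_pow_eq_one h
      rwa [hordζ] at hd
    have hlt : mval p c < p := mval_lt p c
    have h0 : mval p c = 0 := Nat.eq_zero_of_dvd_of_lt hdvd hlt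
    show c = 1
    have : (Multiplicative.toAdd c) = 0 := by
      have := h0
      rw [mval] at this
      exact (ZMod.val_eq_zero _).mp this
    rw [← ofAdd_toAdd c, this, ofAdd_zero]
  · intro u
    obtain ⟨k, hk⟩ := Up_pow_exists p n g hgen horder u.1 u.2
    refine ⟨Multiplicative.ofAdd ((k : ZMod p)), Subtype.ext ?_⟩
    show (g ^ n) ^ (mval p (Multiplicative.ofAdd ((k : ZMod p)))) = (u : Fˣ)
    rw [mval_natCast, pow_eq_pow_of_mod p hζp (Nat.mod_mod_of_dvd _ dvd_rfl), hk]

/-- counting the strictly upper-triangular index pairs. -/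
def pairEquiv : {q : Fin s × Fin s // q.1 < q.2} ≃ Σ j : Fin s, Fin j.val where
  toFun q := ⟨q.1.2, ⟨q.1.1.val, q.2⟩⟩
  invFun t := ⟨(⟨t.2.val, lt_trans t.2.isLt t.1.isLt⟩, t.1), t.2.isLt⟩
  left_inv := by rintro ⟨⟨a, b⟩, h⟩; rfl
  right_inv := by rintro ⟨j, k⟩; rfl

lemma card_pairs : Fintype.card {q : Fin s × Fin s // q.1 < q.2} = s.choose 2 := by
  rw [Fintype.card_congr (pairEquiv s), Fintype.card_sigma]
  simp only [Fintype.card_fin]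
  rw [Fin.sum_univ_eq_sum_range (fun i => i) s, Finset.sum_range_id, Nat.choose_two_right]

/-- reindexing a power of a group along an equiv. -/
def arrowCongrMulEquiv {α β M : Type*} [MulOneClass M] (e : α ≃ β) :
    (α → M) ≃* (β → M) :=
  { Equiv.arrowCongr e (Equiv.refl M) with
    map_mul' := fun f g => rfl }

/-- splitting a power of a group over a sum of index types. -/
def sumArrowMulEquiv (α β M : Type*) [MulOneClass M] :
    ((α ⊕ β) → M) ≃* ((α → M) × (β → M)) :=
  { Equiv.sumArrowEquivProdArrow α β M with
    map_mul' := fun f g => rfl }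

end FinalAssembly
/-- let `F = F_{q^r}` be the field with `q^r` elements, with trivial
action of the elementary abelian group `(C_p)^s`. If `p ∤ q^r - 1` then
`H²((C_p)^s, F^*)` is trivial; if `p ∣ q^r - 1` then `H²((C_p)^s, F^*)` is isomorphic
to the elementary abelian `p`-group of rank `(s+1 choose 2)`. -/
theorem H2_elementary_abelian_over_finite_field {F : Type*} [Field F] [Fintype F]
    (p q r s : ℕ) (hp : p.Prime) (hq : q.Prime) (hr : 0 < r) (hs : 0 < s)
    (hF : Fintype.card F = q ^ r) :
    (¬ p ∣ q ^ r - 1 →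
      Nat.card (H2 (1 : (Fin s → Multiplicative (ZMod p)) →* RingAut F)) = 1) ∧
    (p ∣ q ^ r - 1 →
      Nonempty (H2 (1 : (Fin s → Multiplicative (ZMod p)) →* RingAut F) ≃*
        (Fin ((s + 1).choose 2) → Multiplicative (ZMod p)))) := by
  haveI : Fact p.Prime := ⟨hp⟩
  have hcF : Nat.card Fˣ = q ^ r - 1 := by
    have h1 : Nat.card F = Fintype.card F := Nat.card_eq_fintype_card
    rw [Nat.card_units, h1, hF]
  constructor
  · intro hnd
    apply part1_card_one
    have hcM : Fintype.card (Multiplicative (ZMod p)) = p := by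
      rw [Fintype.card_congr Multiplicative.toAdd, ZMod.card]
    have hcG : Fintype.card (Fin s → Multiplicative (ZMod p)) = p ^ s := by
      rw [Fintype.card_fun, hcM, Fintype.card_fin]
    rw [hcG, hcF]
    exact Nat.Coprime.pow_left s (hp.coprime_iff_not_dvd.mpr hnd)
  · intro hdvd
    letI : Fintype Fˣ := Fintype.ofFinite _
    obtain ⟨g, hg⟩ := IsCyclic.exists_generator (α := Fˣ)
    have hgen : ∀ x : Fˣ, ∃ m : ℕ, g ^ m = x := by
      intro x
      obtain ⟨m, hm⟩ := (mem_powers_iff_mem_zpowers (x := g) (y := x)).mpr (hg x)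
      exact ⟨m, hm⟩
    have hNg : orderOf g = q ^ r - 1 := by
      rw [orderOf_eq_card_of_forall_mem_zpowers hg]; exact hcF
    set n : ℕ := (q ^ r - 1) / p with hn_def
    have horder : orderOf g = n * p := by rw [hNg, hn_def, Nat.div_mul_cancel hdvd]
    have hn0 : 0 < n := by
      have hpos : 0 < orderOf g := orderOf_pos g
      rw [horder] at hpos
      rcases Nat.eq_zero_or_pos n with h | h
      · rw [h] at hpos
        simp at hpos
      · exact h
    have hn : ∀ x : Fˣ, x ^ (n * p) = 1 := by
      intro x
      have hcard : n * p = Nat.card Fˣ := by rw [← horder, hNg, ← hcF]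
      rw [hcard]
      exact pow_card_eq_one'
    have e1 : H2 (1 : (Fin s → Multiplicative (ZMod p)) →* RingAut F) ≃* TT p s F :=
      MulEquiv.ofBijective (PsiBar p s n hn) (PsiBar_bijective p s n hn0 g hgen horder hn)
    have eUp : Multiplicative (ZMod p) ≃* (Up p (F := F)) := upEquiv p n hn0 g hgen horder
    have e2 : TT p s F ≃*
        (({q' : Fin s × Fin s // q'.1 < q'.2} → Multiplicative (ZMod p)) ×
          (Fin s → Multiplicative (ZMod p))) :=
      MulEquiv.prodCongr (MulEquiv.piCongrRight (fun _ => eUp.symm))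
        (MulEquiv.piCongrRight (fun _ => eUp.symm))
    have e3 := (sumArrowMulEquiv {q' : Fin s × Fin s // q'.1 < q'.2} (Fin s)
      (Multiplicative (ZMod p))).symm
    have hcardsum : Fintype.card ({q' : Fin s × Fin s // q'.1 < q'.2} ⊕ Fin s) =
        (s + 1).choose 2 := by
      rw [Fintype.card_sum, card_pairs, Fintype.card_fin]
      show s.choose 2 + s = (s + 1).choose (1 + 1)
      rw [Nat.choose_succ_succ, Nat.choose_one_right, Nat.add_comm]
    have e4 := arrowCongrMulEquiv (M := Multiplicative (ZMod p))
      (Fintype.equivFinOfCardEq hcardsum)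
    exact ⟨e1.trans (e2.trans (e3.trans e4))⟩
end
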